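/- arXiv:2312.01116 — 4 statements merged into one kernel-verified Lean document; each statement's English description precedes it below -/
import Mathlib

section
/- Let k ≥ 2 be an integer, let ψ be a bounded complexity measure, and let A be a nontrivial closed class of decision tables from M_k^∞. Then the function H^∞_{ψ,A} is everywhere defined if and only if the function L_{ψ,A} is everywhere defined. -/
open Classical

noncomputable section

/-- A decision table with many-valued decisions over `E_k = {0,…,k-1}`.
Columns are labeled with attributes `f_i` identified with their indices `i : ℕ`;
a row is a function `ℕ → ℕ` supported on the attribute set, with values `< k`;
each row is labeled with a nonempty finite set of decisions. -/
structure Table (k : ℕ) where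
  attrs : Finset ℕ
  rows : Finset (ℕ → ℕ)
  dec : (ℕ → ℕ) → Finset ℕ
  rows_mem : ∀ r ∈ rows, (∀ i ∈ attrs, r i < k) ∧ (∀ i ∉ attrs, r i = 0)
  dec_nonempty : ∀ r ∈ rows, (dec r).Nonempty

namespace Table

variable {k : ℕ}

/-- a row satisfies a word (a list of (attribute, value) pairs) -/
def rowSat (r : ℕ → ℕ) (α : List (ℕ × ℕ)) : Prop := ∀ q ∈ α, r q.1 = q.2

/-- the word belongs to `Ω_k(T)` -/
def wordOk (T : Table k) (α : List (ℕ × ℕ)) : Prop := ∀ q ∈ α, q.1 ∈ T.attrs ∧ q.2 < k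

/-- the subtable `Tα` -/
def applyWord (T : Table k) (α : List (ℕ × ℕ)) : Table k where
  attrs := T.attrs
  rows := T.rows.filter (fun r => rowSat r α)
  dec := T.dec
  rows_mem := fun r hr => T.rows_mem r (Finset.mem_filter.mp hr).1
  dec_nonempty := fun r hr => T.dec_nonempty r (Finset.mem_filter.mp hr).1

/-- `T ∈ M_k^{∞c}` : the table has a common decision -/
def hasCommon (T : Table k) : Prop := ∃ d : ℕ, ∀ r ∈ T.rows, d ∈ T.dec r

/-- `N(T)` : number of rows -/
def NT (T : Table k) : ℕ := T.rows.card

/-- `W(T)` : number of columns (`0` for the empty table `Λ`) -/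
def WT (T : Table k) : ℕ := if T.rows = ∅ then 0 else T.attrs.card

/-- the closure `[T]` of `T` under removal of columns and changing of decisions:
`Q = J(ν, I(D,T))` for some `D ⊆ At(T)` and some `ν` (the decision labeling of `Q`
on its rows is arbitrary, i.e. is the arbitrary `ν` with nonempty finite values). -/
def closureT (T : Table k) : Set (Table k) :=
  {Q | ∃ D : Finset ℕ, D ⊆ T.attrs ∧ Q.attrs = T.attrs \ D ∧
      Q.rows = T.rows.image (fun r i => if i ∈ T.attrs \ D then r i else 0)}

end Table

/-- a closed class: `[A] = A` -/
def IsClosedClass {k : ℕ} (A : Set (Table k)) : Prop := ∀ T ∈ A, Table.closureT T ⊆ A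

/-- a nontrivial class: contains nonempty tables -/
def NontrivialClass {k : ℕ} (A : Set (Table k)) : Prop := ∃ T ∈ A, T.rows.Nonempty

/-- the part of a `k`-decision tree below one edge leaving the root -/
inductive DTree (k : ℕ) : Type
  | leaf (d : ℕ) : DTree k
  | node (a : ℕ) (n : ℕ) (lab : Fin (n + 1) → ℕ) (ch : Fin (n + 1) → DTree k) : DTree k

namespace DTree

variable {k : ℕ}

/-- the set of pairs (π(τ), terminal decision) over complete paths τ -/
def paths : DTree k → Set (List (ℕ × ℕ) × ℕ)
  | leaf d => {([], d)}
  | node a _ lab ch =>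
      ⋃ i, (fun p : List (ℕ × ℕ) × ℕ => ((a, lab i) :: p.1, p.2)) '' paths (ch i)

/-- edge labels belong to `E_k` -/
def wf : DTree k → Prop
  | leaf _ => True
  | node _ _ lab ch => (∀ i, lab i < k) ∧ ∀ i, wf (ch i)

/-- edges leaving any node are labeled with pairwise different numbers -/
def det : DTree k → Prop
  | leaf _ => True
  | node _ _ lab ch => Function.Injective lab ∧ ∀ i, det (ch i)

/-- the set of attributes attached to nodes -/
def attrs : DTree k → Finset ℕ
  | leaf _ => ∅
  | node a _ _ ch => insert a (Finset.univ.biUnion fun i => attrs (ch i))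

end DTree

/-- a `k`-decision tree: an unlabeled root with `n+1` unlabeled edges leaving it -/
structure KTree (k : ℕ) where
  n : ℕ
  sub : Fin (n + 1) → DTree k

namespace KTree

variable {k : ℕ}

def paths (Γ : KTree k) : Set (List (ℕ × ℕ) × ℕ) := ⋃ i, (Γ.sub i).paths

def wf (Γ : KTree k) : Prop := ∀ i, (Γ.sub i).wf

def attrs (Γ : KTree k) : Finset ℕ := Finset.univ.biUnion fun i => (Γ.sub i).attrs

end KTree

/-- partially bounded complexity measure on words over `P` -/
structure PBCM where
  toFun : List ℕ → ℕ
  pos : ∀ α, toFun α = 0 ↔ α = []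
  perm : ∀ α β, List.Perm α β → toFun α = toFun β
  mono : ∀ α β, toFun α ≤ toFun (α ++ β)
  subadd : ∀ α β, toFun (α ++ β) ≤ toFun α + toFun β

/-- bounded complexity measure -/
structure BCM extends PBCM where
  bdd : ∀ α, α.length ≤ toFun α

/-- extension of ψ to words over pairs `(f_i, δ)` -/
def PBCM.onWord (ψ : PBCM) (α : List (ℕ × ℕ)) : ℕ := ψ.toFun (α.map Prod.fst)

/-- extension of ψ to finite sets of attributes -/
def PBCM.onSet (ψ : PBCM) (s : Finset ℕ) : ℕ := ψ.toFun (s.sort (· ≤ ·))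

/-- the depth `h` -/
def depthCM : BCM where
  toFun := List.length
  pos := fun α => List.length_eq_zero_iff
  perm := fun _ _ h => h.length_eq
  mono := fun α β => by simp
  subadd := fun α β => by simp
  bdd := fun _ => le_rfl

/-- `ψ(Γ)` : complexity of a decision tree -/
def treeComp {k : ℕ} (ψ : PBCM) (Γ : KTree k) : ℕ :=
  sSup {c | ∃ p ∈ Γ.paths, ψ.onWord p.1 = c}

/-- `Γ` is a nondeterministic decision tree for the (nonempty) table `T` -/
def isNDT {k : ℕ} (T : Table k) (Γ : KTree k) : Prop :=
  T.rows.Nonempty ∧ Γ.wf ∧ Γ.attrs ⊆ T.attrs ∧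
  (∀ r ∈ T.rows, ∃ p ∈ Γ.paths, Table.rowSat r p.1) ∧
  (∀ p ∈ Γ.paths, (T.applyWord p.1).rows = ∅ ∨ ∀ r ∈ (T.applyWord p.1).rows, p.2 ∈ T.dec r)

/-- `Γ` is a deterministic decision tree for `T` -/
def isDDT {k : ℕ} (T : Table k) (Γ : KTree k) : Prop :=
  isNDT T Γ ∧ Γ.n = 0 ∧ ∀ i, (Γ.sub i).det

/-- `ψ^a(T)` -/
def psiA {k : ℕ} (ψ : PBCM) (T : Table k) : ℕ :=
  sInf {c | ∃ Γ : KTree k, isNDT T Γ ∧ treeComp ψ Γ = c}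

/-- `ψ^d(T)` -/
def psiD {k : ℕ} (ψ : PBCM) (T : Table k) : ℕ :=
  sInf {c | ∃ Γ : KTree k, isDDT T Γ ∧ treeComp ψ Γ = c}

/-- `m_ψ(T)` -/
def mpsi {k : ℕ} (ψ : PBCM) (T : Table k) : ℕ :=
  if T.rows = ∅ then 0 else T.attrs.sup fun i => ψ.toFun [i]

/-- `W_ψ(T)` -/
def Wpsi {k : ℕ} (ψ : PBCM) (T : Table k) : ℕ :=
  if T.rows = ∅ then 0 else ψ.onSet T.attrs

/-- a tuple `δ̄ ∈ E_k^{|At(T)|}` -/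
def validTuple {k : ℕ} (T : Table k) (δ : ℕ → ℕ) : Prop :=
  (∀ i ∈ T.attrs, δ i < k) ∧ ∀ i ∉ T.attrs, δ i = 0

/-- `M_ψ(T, δ̄)` -/
def MpsiAt {k : ℕ} (ψ : PBCM) (T : Table k) (δ : ℕ → ℕ) : ℕ :=
  sInf {p | ∃ s : Finset ℕ, s ⊆ T.attrs ∧
    (T.applyWord ((s.sort (· ≤ ·)).map fun i => (i, δ i))).hasCommon ∧ ψ.onSet s = p}

/-- `M_ψ(T)` -/
def Mpsi {k : ℕ} (ψ : PBCM) (T : Table k) : ℕ :=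
  if T.hasCommon then 0 else sSup {p | ∃ δ, validTuple T δ ∧ MpsiAt ψ T δ = p}

/-- `U` is a `(ψ,n)`-cover of `T` -/
def isCover {k : ℕ} (ψ : PBCM) (n : ℕ) (T : Table k) (U : Finset (List (ℕ × ℕ))) : Prop :=
  (∀ α ∈ U, T.wordOk α ∧ ψ.onWord α ≤ n) ∧ ∀ r ∈ T.rows, ∃ α ∈ U, Table.rowSat r α

/-- `U` is an irreducible `(ψ,n)`-cover of `T` -/
def isIrredCover {k : ℕ} (ψ : PBCM) (n : ℕ) (T : Table k) (U : Finset (List (ℕ × ℕ))) : Prop :=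
  isCover ψ n T U ∧ ∀ V ⊂ U, ¬ isCover ψ n T V

/-- `l_ψ(T,n)` : maximum cardinality of an irreducible `(ψ,n)`-cover -/
def lpsi {k : ℕ} (ψ : PBCM) (T : Table k) (n : ℕ) : ℕ :=
  sSup {c | ∃ U, isIrredCover ψ n T U ∧ U.card = c}

/-- the set `{ψ^d(T) : T ∈ A, ψ^a(T) ≤ n}`; `H^∞_{ψ,A}(n)` is defined iff this set
is finite, and is then its maximum -/
def HSet {k : ℕ} (ψ : PBCM) (A : Set (Table k)) (n : ℕ) : Set ℕ :=
  {c | ∃ T ∈ A, psiA ψ T ≤ n ∧ psiD ψ T = c}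

/-- `H^∞_{ψ,A}(n)` (as the max = sSup of the finite set `HSet ψ A n`) -/
def Hfun {k : ℕ} (ψ : PBCM) (A : Set (Table k)) (n : ℕ) : ℕ := sSup (HSet ψ A n)

/-- the set `{l_ψ(T,n) : T ∈ A}` -/
def LSet {k : ℕ} (ψ : PBCM) (A : Set (Table k)) (n : ℕ) : Set ℕ :=
  {c | ∃ T ∈ A, lpsi ψ T n = c}

/-- `L_{ψ,A}(n)` -/
def Lfun {k : ℕ} (ψ : PBCM) (A : Set (Table k)) (n : ℕ) : ℕ := sSup (LSet ψ A n)

/-- `H_D` for an infinite `D ⊆ ℕ` : `H_D(n)` is the largest element of `D` that is `≤ n`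
(and `0` if there is none) -/
def HDfun (D : Set ℕ) (n : ℕ) : ℕ := sSup {d | d ∈ D ∧ d ≤ n}

/-- a complete table from `M_2^∞` -/
def isComplete (Q : Table 2) : Prop := Q.NT = 2 ^ Q.attrs.card

/-- `Z(T)` : maximum number of columns in a complete table from `[T]` (`0` if none) -/
def Zt (T : Table 2) : ℕ := sSup {c | ∃ Q ∈ Table.closureT T, isComplete Q ∧ Q.WT = c}

/-- the set `{Z(T) : T ∈ A_ψ(n)}` -/
def ZSet (ψ : PBCM) (A : Set (Table 2)) (n : ℕ) : Set ℕ :=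
  {c | ∃ T ∈ A, mpsi ψ T ≤ n ∧ Zt T = c}

/-- `Z_{ψ,A}(n)` -/
def Zfun (ψ : PBCM) (A : Set (Table 2)) (n : ℕ) : ℕ := sSup (ZSet ψ A n)

/-- annihilating word for `T` -/
def isAnnih (T : Table 2) (α : List (ℕ × ℕ)) : Prop :=
  T.wordOk α ∧ (∀ p ∈ α, ∀ q ∈ α, p.1 = q.1 → p.2 = q.2) ∧ (T.applyWord α).rows = ∅

/-- irreducible annihilating word for `T` -/
def isIrredAnnih (T : Table 2) (α : List (ℕ × ℕ)) : Prop :=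
  isAnnih T α ∧ ∀ β, β.Sublist α → β ≠ α → ¬ isAnnih T β

/-- `G(T)` : maximum length of an irreducible annihilating word (`0` if none) -/
def Gt (T : Table 2) : ℕ := sSup {c | ∃ α, isIrredAnnih T α ∧ α.length = c}

/-- the set `{G(T) : T ∈ A_ψ(n)}` -/
def GSet (ψ : PBCM) (A : Set (Table 2)) (n : ℕ) : Set ℕ :=
  {c | ∃ T ∈ A, mpsi ψ T ≤ n ∧ Gt T = c}

/-- `G_{ψ,A}(n)` -/
def Gfun (ψ : PBCM) (A : Set (Table 2)) (n : ℕ) : ℕ := sSup (GSet ψ A n)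

/-! ### The tables `T_k` and `T_k^*` built from the triangle-shaped graph `G_k` -/

/-- `m(k) = k(k+1)/2` : number of nodes of `G_k` -/
def mnum (k : ℕ) : ℕ := k * (k + 1) / 2

/-- the layer of node `i` of `G_k` : the unique `L` with `m(L-1) < i ≤ m(L)` -/
def layer (i : ℕ) : ℕ := sInf {L | i ≤ mnum L}

/-- left child `l(i) = i + layer i`; right child `p(i) = i + layer i + 1` -/
def lchild (i : ℕ) : ℕ := i + layer i

def rchild (i : ℕ) : ℕ := i + layer i + 1

/-- the map `ν_k : E_2^{m(k)} → P(ω)` -/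
def nuk (k : ℕ) (δ : ℕ → ℕ) : Finset ℕ :=
  (Finset.range (mnum k + 1)).filter fun i =>
    if i = 0 then δ 1 = 0
    else if layer i = k then δ i = 1
    else δ i = 1 ∧ δ (lchild i) = 0 ∧ δ (rchild i) = 0

/-- all tuples over `E_k` supported on the attribute set `s` -/
def allRows (k : ℕ) (s : Finset ℕ) : Finset (ℕ → ℕ) :=
  (s.pi fun _ => Finset.range k).image fun f i => if h : i ∈ s then f i h else 0

/-- the table with attribute set `s`, all possible rows, and decision labeling `d` -/
def fullTable (k : ℕ) (s : Finset ℕ) (d : (ℕ → ℕ) → Finset ℕ) : Table k where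
  attrs := s
  rows := allRows k s
  dec := fun r => if (d r).Nonempty then d r else {0}
  rows_mem := by
    intro r hr
    simp only [allRows, Finset.mem_image] at hr
    obtain ⟨f, hf, rfl⟩ := hr
    refine ⟨fun i hi => ?_, fun i hi => ?_⟩
    · have h := (Finset.mem_pi.mp hf) i hi
      simp only [Finset.mem_range] at h
      simpa [hi] using h
    · simp [hi]
  dec_nonempty := by
    intro r _
    by_cases h : (d r).Nonempty
    · simp [h]
    · simp [h]

/-- the complete table `T_k` with `m(k)` columns `f_1, …, f_{m(k)}` and `2^{m(k)}` rows,
each row `δ̄` labeled with `ν_k(δ̄)` (which is always nonempty) -/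
def Tk (k : ℕ) : Table 2 := fullTable 2 (Finset.Icc 1 (mnum k)) (nuk k)

/-- the `j`-th node of the complete path of `G_k` determined by the choices `c` -/
def pathNode (c : ℕ → Bool) : ℕ → ℕ
  | 0 => 1
  | j + 1 => if c j then lchild (pathNode c j) else rchild (pathNode c j)

/-- `T_k^*` : the subtable of `T_k` whose rows are exactly the characteristic tuples
of complete paths of `G_k` -/
def Tstar (k : ℕ) : Table 2 where
  attrs := (Tk k).attrs
  rows := (Tk k).rows.filter fun r =>
    ∃ c : ℕ → Bool, ∀ i ∈ Finset.Icc 1 (mnum k), (r i = 1 ↔ ∃ j < k, pathNode c j = i)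
  dec := (Tk k).dec
  rows_mem := fun r hr => (Tk k).rows_mem r (Finset.mem_filter.mp hr).1
  dec_nonempty := fun r hr => (Tk k).dec_nonempty r (Finset.mem_filter.mp hr).1

/-- `r(T)` for a subtable `T` of `T_k^*` : the number of distinct decision sets
`ν_k(δ̄)` among the rows `δ̄` of `T` -/
def rnum (k : ℕ) (T : Table 2) : ℕ := (T.rows.image (nuk k)).card

end

noncomputable section Aux

namespace DTree

variable {k : ℕ}

/-- height of a `DTree` -/
def hgt : DTree k → ℕ
  | leaf _ => 0
  | node _ _ _ ch => (Finset.univ.sup fun i => (ch i).hgt) + 1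

lemma paths_finite : ∀ t : DTree k, t.paths.Finite
  | leaf d => Set.finite_singleton _
  | node a n lab ch => Set.finite_iUnion fun i => ((paths_finite (ch i)).image _)

lemma exists_path_hgt : ∀ t : DTree k, ∃ p ∈ t.paths, t.hgt ≤ p.1.length := by
  intro t
  induction t with
  | leaf d => exact ⟨([], d), rfl, by simp [hgt]⟩
  | node a n lab ch ih =>
      obtain ⟨i, _, hi⟩ := Finset.exists_mem_eq_sup Finset.univ
        ⟨0, Finset.mem_univ _⟩ (fun i => (ch i).hgt)
      obtain ⟨p, hp, hlen⟩ := ih i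
      refine ⟨((a, lab i) :: p.1, p.2), ?_, ?_⟩
      · exact Set.mem_iUnion.mpr ⟨i, ⟨p, hp, rfl⟩⟩
      · simp only [hgt, List.length_cons, hi]
        omega

lemma paths_nonempty (t : DTree k) : t.paths.Nonempty := by
  obtain ⟨p, hp, -⟩ := t.exists_path_hgt; exact ⟨p, hp⟩

lemma paths_attr : ∀ t : DTree k, t.wf → ∀ p ∈ t.paths, ∀ q ∈ p.1,
    q.1 ∈ t.attrs ∧ q.2 < k := by
  intro t
  induction t with
  | leaf d =>
      intro _ p hp q hq
      have hp' : p = ([], d) := hp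
      subst hp'; simp at hq
  | node a n lab ch ih =>
      rintro ⟨hlab, hch⟩ p hp q hq
      obtain ⟨i, hpi⟩ := Set.mem_iUnion.mp hp
      obtain ⟨p', hp', rfl⟩ := hpi
      rcases List.mem_cons.mp hq with rfl | hq'
      · exact ⟨Finset.mem_insert_self _ _, hlab i⟩
      · obtain ⟨h1, h2⟩ := ih i (hch i) p' hp' q hq'
        exact ⟨Finset.mem_insert_of_mem (Finset.mem_biUnion.mpr ⟨i, Finset.mem_univ _, h1⟩), h2⟩

lemma exists_bound_finset (hk : 1 ≤ k) :
    ∀ t : DTree k, t.wf → t.det →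
      ∃ F : Finset (List (ℕ × ℕ) × ℕ), (∀ p ∈ t.paths, p ∈ F) ∧ F.card ≤ k ^ t.hgt := by
  intro t
  induction t with
  | leaf d => exact fun _ _ => ⟨{([], d)}, by simp [paths], by simp [hgt]⟩
  | node a n lab ch ih =>
      rintro ⟨hlab, hwch⟩ ⟨hinj, hdch⟩
      choose F hF1 hF2 using fun i => ih i (hwch i) (hdch i)
      refine ⟨Finset.univ.biUnion fun i => (F i).image (fun p => ((a, lab i) :: p.1, p.2)),
        ?_, ?_⟩
      · intro p hp
        obtain ⟨i, hpi⟩ := Set.mem_iUnion.mp hp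
        obtain ⟨p', hp', rfl⟩ := hpi
        exact Finset.mem_biUnion.mpr ⟨i, Finset.mem_univ _,
          Finset.mem_image.mpr ⟨p', hF1 i p' hp', rfl⟩⟩
      · have hcard : n + 1 ≤ k := by
          have := Fintype.card_le_of_injective (fun i => (⟨lab i, hlab i⟩ : Fin k))
            (fun i j h => hinj (congrArg Fin.val h))
          simpa using this
        calc (Finset.univ.biUnion fun i => (F i).image
                (fun p => ((a, lab i) :: p.1, p.2))).card
            ≤ ∑ i, ((F i).image (fun p => ((a, lab i) :: p.1, p.2))).card :=
              Finset.card_biUnion_le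
          _ ≤ ∑ i, k ^ (Finset.univ.sup fun j => (ch j).hgt) := by
              refine Finset.sum_le_sum fun i _ => ?_
              exact le_trans (Finset.card_image_le) (le_trans (hF2 i)
                (Nat.pow_le_pow_right hk
                  (Finset.le_sup (f := fun j => (ch j).hgt) (Finset.mem_univ i))))
          _ = (n + 1) * k ^ (Finset.univ.sup fun j => (ch j).hgt) := by
              simp [Finset.sum_const, mul_comm]
          _ ≤ k * k ^ (Finset.univ.sup fun j => (ch j).hgt) :=
              Nat.mul_le_mul_right _ hcard
          _ = k ^ ((Finset.univ.sup fun j => (ch j).hgt) + 1) := by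
              rw [pow_succ]; ring
          _ = k ^ (node a n lab ch).hgt := rfl

end DTree

section KTreeAux

variable {k : ℕ}

lemma KTree.paths_finite (Γ : KTree k) : Γ.paths.Finite :=
  Set.finite_iUnion fun i => (Γ.sub i).paths_finite

lemma le_treeComp (ψ : PBCM) (Γ : KTree k) {p : List (ℕ × ℕ) × ℕ} (hp : p ∈ Γ.paths) :
    ψ.onWord p.1 ≤ treeComp ψ Γ := by
  have himg : {c | ∃ p ∈ Γ.paths, ψ.onWord p.1 = c} = (fun p => ψ.onWord p.1) '' Γ.paths := rfl
  refine le_csSup ?_ ⟨p, hp, rfl⟩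
  rw [himg]
  exact (Γ.paths_finite.image _).bddAbove

lemma natSSup_le {s : Set ℕ} {b : ℕ} (h : ∀ x ∈ s, x ≤ b) : sSup s ≤ b := by
  rcases s.eq_empty_or_nonempty with rfl | hne
  · simp
  · exact csSup_le hne h

lemma treeComp_le {ψ : PBCM} {Γ : KTree k} {b : ℕ}
    (h : ∀ p ∈ Γ.paths, ψ.onWord p.1 ≤ b) : treeComp ψ Γ ≤ b := by
  refine natSSup_le ?_
  rintro x ⟨p, hp, rfl⟩
  exact h p hp

lemma mem_applyWord {T : Table k} {β : List (ℕ × ℕ)} {r : ℕ → ℕ} :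
    r ∈ (T.applyWord β).rows ↔ r ∈ T.rows ∧ Table.rowSat r β :=
  Finset.mem_filter

end KTreeAux

section BuildAux

variable {k : ℕ}

lemma psi_nil (ψ : PBCM) : ψ.toFun [] = 0 := (ψ.pos []).mpr rfl

lemma psi_flatten_le (ψ : PBCM) (n : ℕ) :
    ∀ ws : List (List (ℕ × ℕ)), (∀ α ∈ ws, ψ.onWord α ≤ n) →
      ψ.toFun (ws.map (List.map Prod.fst)).flatten ≤ ws.length * n := by
  intro ws
  induction ws with
  | nil => intro _; simp [psi_nil]
  | cons α ws ih =>
      intro h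
      simp only [List.map_cons, List.flatten_cons, List.length_cons]
      calc ψ.toFun (α.map Prod.fst ++ (ws.map (List.map Prod.fst)).flatten)
          ≤ ψ.toFun (α.map Prod.fst) + ψ.toFun (ws.map (List.map Prod.fst)).flatten :=
            ψ.subadd _ _
        _ ≤ n + ws.length * n :=
            add_le_add (h α (List.mem_cons_self)) (ih fun β hβ => h β (List.mem_cons_of_mem _ hβ))
        _ = (ws.length + 1) * n := by ring

/-- the common decision of `Tβ`, when it exists -/
def chooseDec (T : Table k) (β : List (ℕ × ℕ)) : ℕ :=
  if h : (T.applyWord β).hasCommon then h.choose else 0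

lemma chooseDec_spec {T : Table k} {β : List (ℕ × ℕ)} (h : (T.applyWord β).hasCommon) :
    ∀ r ∈ (T.applyWord β).rows, chooseDec T β ∈ T.dec r := by
  intro r hr
  rw [chooseDec, dif_pos h]
  exact h.choose_spec r hr

/-- the full deterministic tree querying the attributes in `L` in order -/
def buildDT (T : Table k) : List ℕ → List (ℕ × ℕ) → DTree k
  | [], β => .leaf (chooseDec T β)
  | a :: L, β => .node a (k - 1) (fun i => (i : ℕ))
      (fun i => buildDT T L (β ++ [(a, (i : ℕ))]))

lemma buildDT_wf (hk : 1 ≤ k) (T : Table k) : ∀ L β, (buildDT T L β).wf := by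
  intro L
  induction L with
  | nil => intro β; trivial
  | cons a L ih =>
      intro β
      refine ⟨fun i => ?_, fun i => ih _⟩
      show (i : ℕ) < k
      have := i.isLt; omega

lemma buildDT_det (T : Table k) : ∀ L β, (buildDT T L β).det := by
  intro L
  induction L with
  | nil => intro β; trivial
  | cons a L ih =>
      intro β
      exact ⟨fun i j h => Fin.ext h, fun i => ih _⟩

lemma buildDT_attrs (T : Table k) : ∀ L β, (buildDT T L β).attrs ⊆ L.toFinset := by
  intro L
  induction L with
  | nil => intro β; simp [buildDT, DTree.attrs]
  | cons a L ih =>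
      intro β x hx
      rcases Finset.mem_insert.mp hx with rfl | hx'
      · simp
      · obtain ⟨i, -, hxi⟩ := Finset.mem_biUnion.mp hx'
        simp only [List.toFinset_cons, Finset.mem_insert]
        exact Or.inr (ih _ hxi)

lemma buildDT_paths (hk : 1 ≤ k) (T : Table k) : ∀ L β p, p ∈ (buildDT T L β).paths →
    p.1.map Prod.fst = L ∧ (∀ q ∈ p.1, q.2 < k) ∧ p.2 = chooseDec T (β ++ p.1) := by
  intro L
  induction L with
  | nil =>
      intro β p hp
      have hp' : p = ([], chooseDec T β) := hp
      subst hp'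
      refine ⟨rfl, by simp, ?_⟩
      simp
  | cons a L ih =>
      intro β p hp
      obtain ⟨i, hpi⟩ := Set.mem_iUnion.mp hp
      obtain ⟨p', hp', rfl⟩ := hpi
      obtain ⟨h1, h2, h3⟩ := ih (β ++ [(a, (i : ℕ))]) p' hp'
      refine ⟨by simp [h1], ?_, ?_⟩
      · intro q hq
        rcases List.mem_cons.mp hq with rfl | hq'
        · have := i.isLt; simp only; omega
        · exact h2 q hq'
      · rw [h3]
        congr 1
        simp

lemma buildDT_cover (hk : 1 ≤ k) (T : Table k) (r : ℕ → ℕ) :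
    ∀ L β, (∀ a ∈ L, r a < k) → ∃ p ∈ (buildDT T L β).paths, Table.rowSat r p.1 := by
  intro L
  induction L with
  | nil =>
      intro β _
      exact ⟨([], chooseDec T β), rfl, fun q hq => by simp at hq⟩
  | cons a L ih =>
      intro β hvals
      have ha : r a < k - 1 + 1 := by
        have := hvals a (List.mem_cons_self); omega
      obtain ⟨p, hp, hsat⟩ := ih (β ++ [(a, ((⟨r a, ha⟩ : Fin (k - 1 + 1)) : ℕ))])
        (fun b hb => hvals b (List.mem_cons_of_mem _ hb))
      refine ⟨((a, ((⟨r a, ha⟩ : Fin (k - 1 + 1)) : ℕ)) :: p.1, p.2),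
        Set.mem_iUnion.mpr ⟨⟨r a, ha⟩, ⟨p, hp, rfl⟩⟩, ?_⟩
      intro q hq
      rcases List.mem_cons.mp hq with rfl | hq'
      · rfl
      · exact hsat q hq'

lemma build_isDDT (hk : 1 ≤ k) (T : Table k) (hT : T.rows.Nonempty) (ψ : PBCM) (L : List ℕ)
    (hL : ∀ a ∈ L, a ∈ T.attrs)
    (hcom : ∀ β : List (ℕ × ℕ), β.map Prod.fst = L → (T.applyWord β).hasCommon) :
    isDDT T ⟨0, fun _ => buildDT T L []⟩ ∧
      treeComp ψ ⟨0, fun _ => buildDT T L []⟩ ≤ ψ.toFun L := by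
  set Γ : KTree k := ⟨0, fun _ => buildDT T L []⟩ with hΓ
  have hmem : ∀ p, p ∈ Γ.paths ↔ p ∈ (buildDT T L []).paths := by
    intro p
    constructor
    · intro hp; obtain ⟨i, hpi⟩ := Set.mem_iUnion.mp hp; exact hpi
    · intro hp; exact Set.mem_iUnion.mpr ⟨0, hp⟩
  have hndt : isNDT T Γ := by
    refine ⟨hT, fun i => buildDT_wf hk T L [], ?_, ?_, ?_⟩
    · intro x hx
      obtain ⟨i, -, hxi⟩ := Finset.mem_biUnion.mp hx
      exact hL x (List.mem_toFinset.mp (buildDT_attrs T L [] hxi))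
    · intro r hr
      obtain ⟨p, hp, hsat⟩ := buildDT_cover hk T r L []
        (fun a ha => (T.rows_mem r hr).1 a (hL a ha))
      exact ⟨p, (hmem p).mpr hp, hsat⟩
    · intro p hp
      obtain ⟨h1, -, h3⟩ := buildDT_paths hk T L [] p ((hmem p).mp hp)
      right
      intro r hr
      have h3' : p.2 = chooseDec T p.1 := h3
      rw [h3']
      exact chooseDec_spec (hcom p.1 h1) r hr
  refine ⟨⟨hndt, rfl, fun i => buildDT_det T L []⟩, ?_⟩
  refine treeComp_le ?_
  intro p hp
  obtain ⟨h1, -, -⟩ := buildDT_paths hk T L [] p ((hmem p).mp hp)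
  show ψ.toFun (p.1.map Prod.fst) ≤ ψ.toFun L
  rw [h1]

lemma fullWordCommon (T : Table k) (β : List (ℕ × ℕ))
    (h : ∀ a ∈ T.attrs, a ∈ β.map Prod.fst) : (T.applyWord β).hasCommon := by
  rcases (T.applyWord β).rows.eq_empty_or_nonempty with he | ⟨r0, hr0⟩
  · exact ⟨0, fun r hr => by rw [he] at hr; simp at hr⟩
  · obtain ⟨d, hd⟩ := (T.applyWord β).dec_nonempty r0 hr0
    refine ⟨d, fun r hr => ?_⟩
    obtain ⟨hrT, hrs⟩ := mem_applyWord.mp hr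
    obtain ⟨hr0T, hr0s⟩ := mem_applyWord.mp hr0
    have : r = r0 := by
      funext a
      by_cases ha : a ∈ T.attrs
      · obtain ⟨q, hq, hqa⟩ := List.mem_map.mp (h a ha)
        rw [← hqa, hrs q hq, hr0s q hq]
      · rw [(T.rows_mem r hrT).2 a ha, (T.rows_mem r0 hr0T).2 a ha]
    rw [this]
    exact hd

lemma exists_DDT (hk : 1 ≤ k) (T : Table k) (hT : T.rows.Nonempty) :
    ∃ Γ : KTree k, isDDT T Γ := by
  have h := build_isDDT hk T hT depthCM.toPBCM (T.attrs.sort (· ≤ ·))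
    (fun a ha => (Finset.mem_sort _).mp ha)
    (fun β hβ => fullWordCommon T β (fun a ha => by
      rw [hβ]; exact (Finset.mem_sort _).mpr ha))
  exact ⟨_, h.1⟩

end BuildAux

section ChainAux

variable {k : ℕ}

/-- a chain tree checking the word `α` and returning decision `d` -/
def chainDT : List (ℕ × ℕ) → ℕ → DTree k
  | [], d => .leaf d
  | q :: α, d => .node q.1 0 (fun _ => q.2) (fun _ => chainDT α d)

lemma chainDT_paths : ∀ (α : List (ℕ × ℕ)) (d : ℕ) (p : List (ℕ × ℕ) × ℕ),
    p ∈ (chainDT (k := k) α d).paths ↔ p = (α, d) := by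
  intro α
  induction α with
  | nil => intro d p; exact Iff.rfl
  | cons q α ih =>
      intro d p
      constructor
      · intro hp
        obtain ⟨i, hpi⟩ := Set.mem_iUnion.mp hp
        obtain ⟨p', hp', rfl⟩ := hpi
        have hpe := (ih d p').mp hp'
        subst hpe
        rfl
      · rintro rfl
        exact Set.mem_iUnion.mpr ⟨0, ⟨(α, d), (ih d (α, d)).mpr rfl, rfl⟩⟩

lemma chainDT_wf : ∀ (α : List (ℕ × ℕ)) (d : ℕ), (∀ q ∈ α, q.2 < k) →
    (chainDT (k := k) α d).wf := by
  intro α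
  induction α with
  | nil => intro d _; trivial
  | cons q α ih =>
      intro d h
      exact ⟨fun _ => h q (List.mem_cons_self),
        fun _ => ih d (fun q' hq' => h q' (List.mem_cons_of_mem _ hq'))⟩

lemma chainDT_det : ∀ (α : List (ℕ × ℕ)) (d : ℕ), (chainDT (k := k) α d).det := by
  intro α
  induction α with
  | nil => intro d; trivial
  | cons q α ih =>
      exact fun d => ⟨fun i j _ => Fin.ext (by omega), fun _ => ih d⟩

lemma chainDT_attrs : ∀ (α : List (ℕ × ℕ)) (d : ℕ),
    (chainDT (k := k) α d).attrs ⊆ (α.map Prod.fst).toFinset := by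
  intro α
  induction α with
  | nil => intro d; simp [chainDT, DTree.attrs]
  | cons q α ih =>
      intro d x hx
      rcases Finset.mem_insert.mp hx with rfl | hx'
      · simp
      · obtain ⟨i, -, hxi⟩ := Finset.mem_biUnion.mp hx'
        simp only [List.map_cons, List.toFinset_cons, Finset.mem_insert]
        exact Or.inr (ih d hxi)

end ChainAux

section CoverAux

variable {k : ℕ}

lemma exists_irred_subcover {ψ : PBCM} {n : ℕ} {T : Table k}
    {U0 : Finset (List (ℕ × ℕ))} (h : isCover ψ n T U0) :
    ∃ U ⊆ U0, isIrredCover ψ n T U := by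
  classical
  set s := U0.powerset.filter (fun V => isCover ψ n T V) with hs
  have hU0s : U0 ∈ s := by
    rw [hs, Finset.mem_filter]
    exact ⟨Finset.mem_powerset_self _, h⟩
  obtain ⟨U, hUs, hmin⟩ := Finset.exists_min_image s Finset.card ⟨U0, hU0s⟩
  rw [hs, Finset.mem_filter, Finset.mem_powerset] at hUs
  refine ⟨U, hUs.1, hUs.2, fun V hV hVc => ?_⟩
  have hVs : V ∈ s := by
    rw [hs, Finset.mem_filter, Finset.mem_powerset]
    exact ⟨hV.subset.trans hUs.1, hVc⟩
  have := hmin V hVs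
  have := Finset.card_lt_card hV
  omega

lemma irred_witness {ψ : PBCM} {n : ℕ} {T : Table k} {U : Finset (List (ℕ × ℕ))}
    (h : isIrredCover ψ n T U) :
    ∀ α ∈ U, ∃ r ∈ T.rows, Table.rowSat r α ∧ ∀ β ∈ U, Table.rowSat r β → β = α := by
  intro α hα
  by_contra hc
  push_neg at hc
  apply h.2 (U.erase α) (Finset.erase_ssubset hα)
  refine ⟨fun β hβ => h.1.1 β (Finset.mem_of_mem_erase hβ), fun r hr => ?_⟩
  obtain ⟨β, hβ, hsat⟩ := h.1.2 r hr
  by_cases hba : β = α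
  · subst hba
    obtain ⟨γ, hγU, hγs, hγne⟩ := hc r hr hsat
    exact ⟨γ, Finset.mem_erase.mpr ⟨hγne, hγU⟩, hγs⟩
  · exact ⟨β, Finset.mem_erase.mpr ⟨hba, hβ⟩, hsat⟩

lemma irred_card_le {ψ : PBCM} {n : ℕ} {T : Table k} {U : Finset (List (ℕ × ℕ))}
    (h : isIrredCover ψ n T U) : U.card ≤ T.rows.card := by
  classical
  choose! f hf1 hf2 hf3 using irred_witness h
  refine Finset.card_le_card_of_injOn f (fun α hα => hf1 α hα) ?_
  intro α hα β hβ he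
  exact hf3 β hβ α hα (he ▸ hf2 α hα)

lemma lpsi_ge {ψ : PBCM} {n : ℕ} {T : Table k} {U : Finset (List (ℕ × ℕ))}
    (h : isIrredCover ψ n T U) : U.card ≤ lpsi ψ T n := by
  refine le_csSup ⟨T.rows.card, ?_⟩ ⟨U, h, rfl⟩
  rintro x ⟨V, hV, rfl⟩
  exact irred_card_le hV

lemma lpsi_le {ψ : PBCM} {n : ℕ} {T : Table k} {b : ℕ}
    (h : ∀ U, isIrredCover ψ n T U → U.card ≤ b) : lpsi ψ T n ≤ b := by
  refine natSSup_le ?_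
  rintro x ⟨U, hU, rfl⟩
  exact h U hU

end CoverAux

section DirB

variable {k : ℕ}

lemma dirB (hk : 2 ≤ k) (ψ : BCM) (A : Set (Table k)) (n : ℕ)
    (hL : (LSet ψ.toPBCM A n).Finite) : (HSet ψ.toPBCM A n).Finite := by
  have hk1 : 1 ≤ k := by omega
  obtain ⟨C, hC⟩ : ∃ C, ∀ x ∈ LSet ψ.toPBCM A n, x ≤ C := by
    rcases hL.bddAbove with ⟨C, hC⟩
    exact ⟨C, fun x hx => hC hx⟩
  refine Set.Finite.subset (Set.finite_Iic (C * n)) ?_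
  rintro x ⟨T, hTA, hTa, rfl⟩
  show psiD ψ.toPBCM T ≤ C * n
  rcases T.rows.eq_empty_or_nonempty with he | hne
  · have hempty : {c | ∃ Γ : KTree k, isDDT T Γ ∧ treeComp ψ.toPBCM Γ = c} = ∅ := by
      ext c
      simp only [Set.mem_setOf_eq, Set.mem_empty_iff_false, iff_false, not_exists]
      rintro Γ ⟨⟨⟨hne', -⟩, -⟩, -⟩
      rw [he] at hne'
      exact absurd hne' (by simp)
    rw [psiD, hempty, Nat.sInf_empty]
    exact Nat.zero_le _
  · -- extract an optimal nondeterministic decision tree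
    have hSne : {c | ∃ Γ : KTree k, isNDT T Γ ∧ treeComp ψ.toPBCM Γ = c}.Nonempty := by
      obtain ⟨Γ0, hΓ0⟩ := exists_DDT hk1 T hne
      exact ⟨treeComp ψ.toPBCM Γ0, Γ0, hΓ0.1, rfl⟩
    obtain ⟨Γ, hΓ, hΓc⟩ := Nat.sInf_mem hSne
    have hΓn : treeComp ψ.toPBCM Γ ≤ n := by
      rw [hΓc]; exact hTa
    -- the cover of path words
    set P : Finset (List (ℕ × ℕ) × ℕ) := (KTree.paths_finite Γ).toFinset with hP
    set U0 : Finset (List (ℕ × ℕ)) := P.image Prod.fst with hU0def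
    have hmemU0 : ∀ α ∈ U0, ∃ p ∈ Γ.paths, p.1 = α := by
      intro α hα
      obtain ⟨p, hp, rfl⟩ := Finset.mem_image.mp hα
      exact ⟨p, (Set.Finite.mem_toFinset _).mp hp, rfl⟩
    have hwordOk : ∀ p ∈ Γ.paths, T.wordOk p.1 := by
      intro p hp q hq
      obtain ⟨i, hpi⟩ := Set.mem_iUnion.mp hp
      obtain ⟨h1, h2⟩ := DTree.paths_attr (Γ.sub i) (hΓ.2.1 i) p hpi q hq
      refine ⟨hΓ.2.2.1 ?_, h2⟩
      exact Finset.mem_biUnion.mpr ⟨i, Finset.mem_univ _, h1⟩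
    have hU0 : isCover ψ.toPBCM n T U0 := by
      constructor
      · intro α hα
        obtain ⟨p, hp, rfl⟩ := hmemU0 α hα
        exact ⟨hwordOk p hp, le_trans (le_treeComp _ _ hp) hΓn⟩
      · intro r hr
        obtain ⟨p, hp, hsat⟩ := hΓ.2.2.2.1 r hr
        exact ⟨p.1, Finset.mem_image.mpr ⟨p, (Set.Finite.mem_toFinset _).mpr hp, rfl⟩, hsat⟩
    have hcomU0 : ∀ α ∈ U0, (T.applyWord α).hasCommon := by
      intro α hα
      obtain ⟨p, hp, rfl⟩ := hmemU0 α hα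
      rcases hΓ.2.2.2.2 p hp with he2 | hcm
      · exact ⟨0, fun r hr => by rw [he2] at hr; simp at hr⟩
      · exact ⟨p.2, hcm⟩
    obtain ⟨U, hUsub, hUirr⟩ := exists_irred_subcover hU0
    have hUcard : U.card ≤ C :=
      le_trans (lpsi_ge hUirr) (hC _ ⟨T, hTA, rfl⟩)
    set L : List ℕ := (U.toList.map (List.map Prod.fst)).flatten with hLdef
    have hLattrs : ∀ a ∈ L, a ∈ T.attrs := by
      intro a ha
      obtain ⟨l, hl, hal⟩ := List.mem_flatten.mp ha
      obtain ⟨α, hα, rfl⟩ := List.mem_map.mp hl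
      obtain ⟨q, hq, rfl⟩ := List.mem_map.mp hal
      exact ((hU0.1 α (hUsub (Finset.mem_toList.mp hα))).1 q hq).1
    have hcom : ∀ β : List (ℕ × ℕ), β.map Prod.fst = L → (T.applyWord β).hasCommon := by
      intro β hβ
      rcases (T.applyWord β).rows.eq_empty_or_nonempty with he2 | ⟨r0, hr0⟩
      · exact ⟨0, fun r hr => by rw [he2] at hr; simp at hr⟩
      · obtain ⟨hr0T, hr0s⟩ := mem_applyWord.mp hr0
        obtain ⟨α, hαU, hαsat⟩ := hUirr.1.2 r0 hr0T
        obtain ⟨d, hd⟩ := hcomU0 α (hUsub hαU)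
        refine ⟨d, fun r hr => ?_⟩
        obtain ⟨hrT, hrs⟩ := mem_applyWord.mp hr
        refine hd r (mem_applyWord.mpr ⟨hrT, ?_⟩)
        intro q hq
        have hqL : q.1 ∈ L := by
          refine List.mem_flatten.mpr ⟨α.map Prod.fst, ?_, List.mem_map.mpr ⟨q, hq, rfl⟩⟩
          exact List.mem_map.mpr ⟨α, Finset.mem_toList.mpr hαU, rfl⟩
        rw [← hβ] at hqL
        obtain ⟨q', hq', hq'1⟩ := List.mem_map.mp hqL
        have e1 : r q.1 = q'.2 := by rw [← hq'1]; exact hrs q' hq'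
        have e2 : r0 q.1 = q'.2 := by rw [← hq'1]; exact hr0s q' hq'
        have e3 : r0 q.1 = q.2 := hαsat q hq
        rw [e1, ← e2, e3]
    obtain ⟨hDDT, hcomp⟩ := build_isDDT hk1 T hne ψ.toPBCM L hLattrs hcom
    have h1 : psiD ψ.toPBCM T ≤ ψ.toFun L :=
      le_trans (Nat.sInf_le ⟨_, hDDT, rfl⟩) hcomp
    have h2 : ψ.toFun L ≤ U.card * n := by
      rw [hLdef, ← Finset.length_toList U]
      exact psi_flatten_le ψ.toPBCM n U.toList
        (fun α hα => (hU0.1 α (hUsub (Finset.mem_toList.mp hα))).2)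
    calc psiD ψ.toPBCM T ≤ U.card * n := le_trans h1 h2
      _ ≤ C * n := Nat.mul_le_mul_right _ hUcard

end DirB

section DirA

variable {k : ℕ}

lemma dirA (hk : 2 ≤ k) (ψ : BCM) (A : Set (Table k)) (hclosed : IsClosedClass A) (n : ℕ)
    (hH : (HSet ψ.toPBCM A n).Finite) : (LSet ψ.toPBCM A n).Finite := by
  have hk1 : 1 ≤ k := by omega
  obtain ⟨C, hC⟩ : ∃ C, ∀ x ∈ HSet ψ.toPBCM A n, x ≤ C := by
    rcases hH.bddAbove with ⟨C, hC⟩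
    exact ⟨C, fun x hx => hC hx⟩
  refine Set.Finite.subset (Set.finite_Iic (k ^ C)) ?_
  rintro x ⟨T, hTA, rfl⟩
  refine Set.mem_Iic.mpr (lpsi_le ?_)
  intro U hU
  rcases U.eq_empty_or_nonempty with rfl | hUne
  · simp
  have hrows : T.rows.Nonempty := by
    rcases T.rows.eq_empty_or_nonempty with he | h
    · exfalso
      apply hU.2 ∅ (Finset.empty_ssubset.mpr hUne)
      exact ⟨fun α hα => absurd hα (Finset.notMem_empty α),
        fun r hr => by rw [he] at hr; simp at hr⟩
    · exact h
  -- the relabeled table Q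
  set dQ : (ℕ → ℕ) → Finset ℕ := fun r =>
    if (U.filter fun β => Table.rowSat r β).Nonempty
    then (U.filter fun β => Table.rowSat r β).image Encodable.encode else {0} with hdQ
  have hdQne : ∀ r ∈ T.rows, (dQ r).Nonempty := by
    intro r hr
    by_cases hne2 : (U.filter fun β => Table.rowSat r β).Nonempty
    · rw [hdQ]; simp only [if_pos hne2]; exact hne2.image _
    · rw [hdQ]; simp only [if_neg hne2]; exact ⟨0, by simp⟩
  set Q : Table k := ⟨T.attrs, T.rows, dQ, T.rows_mem, hdQne⟩ with hQ
  have hQA : Q ∈ A := by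
    apply hclosed T hTA
    refine ⟨∅, Finset.empty_subset _, ?_, ?_⟩
    · show T.attrs = T.attrs \ ∅
      simp
    · show T.rows = T.rows.image _
      have himg : ∀ r ∈ T.rows, (fun i => if i ∈ T.attrs \ ∅ then r i else 0) = r := by
        intro r hr
        funext i
        by_cases hi : i ∈ T.attrs
        · simp [hi]
        · simp [hi, (T.rows_mem r hr).2 i hi]
      calc T.rows = T.rows.image id := Finset.image_id.symm
        _ = T.rows.image _ := (Finset.image_congr (fun r hr => himg r hr)).symm
  have hdec_single : ∀ α ∈ U, ∀ r, Table.rowSat r α →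
      (∀ β ∈ U, Table.rowSat r β → β = α) → dQ r = {Encodable.encode α} := by
    intro α hα r hs hu
    have hfilter : (U.filter fun β => Table.rowSat r β) = {α} := by
      apply Finset.eq_singleton_iff_unique_mem.mpr
      exact ⟨Finset.mem_filter.mpr ⟨hα, hs⟩,
        fun β hβ => hu β (Finset.mem_filter.mp hβ).1 (Finset.mem_filter.mp hβ).2⟩
    rw [hdQ]
    simp only [hfilter]
    rw [if_pos (Finset.singleton_nonempty α)]
    simp
  -- the nondeterministic tree for Q given by the cover
  have hpos : 0 < U.card := Finset.card_pos.mpr hUne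
  have hlt : ∀ i : Fin (U.card - 1 + 1), (i : ℕ) < U.toList.length := by
    intro i
    rw [Finset.length_toList]
    have := i.isLt
    omega
  set g : Fin (U.card - 1 + 1) → List (ℕ × ℕ) := fun i => U.toList.get ⟨i, hlt i⟩ with hg
  have hgU : ∀ i, g i ∈ U := fun i => Finset.mem_toList.mp (List.get_mem U.toList ⟨i, hlt i⟩)
  set ΓU : KTree k := ⟨U.card - 1, fun i => chainDT (g i) (Encodable.encode (g i))⟩ with hΓU
  have hpathsΓU : ∀ p ∈ ΓU.paths, ∃ i, p = (g i, Encodable.encode (g i)) := by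
    intro p hp
    obtain ⟨i, hpi⟩ := Set.mem_iUnion.mp hp
    exact ⟨i, (chainDT_paths _ _ _).mp hpi⟩
  have hNDT : isNDT Q ΓU := by
    refine ⟨hrows, ?_, ?_, ?_, ?_⟩
    · intro i
      exact chainDT_wf _ _ (fun q hq => ((hU.1.1 (g i) (hgU i)).1 q hq).2)
    · intro x hx
      obtain ⟨i, -, hxi⟩ := Finset.mem_biUnion.mp hx
      obtain ⟨q, hq, rfl⟩ := List.mem_map.mp (List.mem_toFinset.mp (chainDT_attrs _ _ hxi))
      exact ((hU.1.1 (g i) (hgU i)).1 q hq).1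
    · intro r hr
      obtain ⟨α, hα, hsat⟩ := hU.1.2 r hr
      obtain ⟨⟨j, hj⟩, hget⟩ := List.mem_iff_get.mp (Finset.mem_toList.mpr hα)
      have hj' : j < U.card - 1 + 1 := by
        rw [Finset.length_toList] at hj
        omega
      refine ⟨(g ⟨j, hj'⟩, Encodable.encode (g ⟨j, hj'⟩)),
        Set.mem_iUnion.mpr ⟨⟨j, hj'⟩, (chainDT_paths _ _ _).mpr rfl⟩, ?_⟩
      have hge : g ⟨j, hj'⟩ = α := hget
      rw [hge]
      exact hsat
    · intro p hp
      obtain ⟨i, rfl⟩ := hpathsΓU p hp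
      right
      intro r hr
      obtain ⟨hrQ, hrs⟩ := mem_applyWord.mp hr
      show Encodable.encode (g i) ∈ dQ r
      have hfne : (U.filter fun β => Table.rowSat r β).Nonempty :=
        ⟨g i, Finset.mem_filter.mpr ⟨hgU i, hrs⟩⟩
      rw [hdQ]
      simp only [if_pos hfne]
      exact Finset.mem_image.mpr ⟨g i, Finset.mem_filter.mpr ⟨hgU i, hrs⟩, rfl⟩
  have hpsiA : psiA ψ.toPBCM Q ≤ n := by
    refine le_trans (Nat.sInf_le ⟨ΓU, hNDT, rfl⟩) (treeComp_le ?_)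
    intro p hp
    obtain ⟨i, rfl⟩ := hpathsΓU p hp
    exact (hU.1.1 (g i) (hgU i)).2
  -- an optimal deterministic tree for Q
  have hDne : {c | ∃ Γ : KTree k, isDDT Q Γ ∧ treeComp ψ.toPBCM Γ = c}.Nonempty := by
    obtain ⟨Γ0, h0⟩ := exists_DDT hk1 Q hrows
    exact ⟨_, Γ0, h0, rfl⟩
  obtain ⟨Γd, hΓd, hΓdc⟩ := Nat.sInf_mem hDne
  have hΓdC : treeComp ψ.toPBCM Γd ≤ C := by
    rw [hΓdc]
    exact hC _ ⟨Q, hQA, hpsiA, rfl⟩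
  have hn0 := hΓd.2.1
  have hpathsub : ∀ p ∈ Γd.paths, p ∈ (Γd.sub 0).paths := by
    intro p hp
    obtain ⟨i, hpi⟩ := Set.mem_iUnion.mp hp
    have hi0 : i = 0 := by
      apply Fin.ext
      simp only [Fin.val_zero]
      have h1 := i.isLt
      omega
    rwa [hi0] at hpi
  obtain ⟨F, hF1, hF2⟩ := DTree.exists_bound_finset hk1 (Γd.sub 0) (hΓd.1.2.1 0) (hΓd.2.2 0)
  have hhgt : (Γd.sub 0).hgt ≤ C := by
    obtain ⟨p, hp, hlen⟩ := (Γd.sub 0).exists_path_hgt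
    have hpΓ : p ∈ Γd.paths := Set.mem_iUnion.mpr ⟨0, hp⟩
    have hb : p.1.length ≤ ψ.toPBCM.onWord p.1 := by
      have := ψ.bdd (p.1.map Prod.fst)
      rwa [List.length_map] at this
    exact le_trans hlen (le_trans hb (le_trans (le_treeComp _ _ hpΓ) hΓdC))
  have hFC : F.card ≤ k ^ C := le_trans hF2 (Nat.pow_le_pow_right hk1 hhgt)
  -- the injection from the irreducible cover into the complete paths
  choose! rW hrW1 hrW2 hrW3 using irred_witness hU
  have hpath : ∀ α ∈ U, ∃ p ∈ Γd.paths, Table.rowSat (rW α) p.1 := by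
    intro α hα
    exact hΓd.1.2.2.2.1 (rW α) (hrW1 α hα)
  choose! P hP1 hP2 using hpath
  have hP3 : ∀ α ∈ U, (P α).2 = Encodable.encode α := by
    intro α hα
    have hmem : rW α ∈ (Q.applyWord (P α).1).rows :=
      mem_applyWord.mpr ⟨hrW1 α hα, hP2 α hα⟩
    rcases hΓd.1.2.2.2.2 (P α) (hP1 α hα) with he2 | hcm
    · rw [he2] at hmem
      simp at hmem
    · have hd := hcm _ hmem
      have hsing : dQ (rW α) = {Encodable.encode α} :=
        hdec_single α hα (rW α) (hrW2 α hα) (hrW3 α hα)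
      have hd' : (P α).2 ∈ dQ (rW α) := hd
      rw [hsing] at hd'
      exact Finset.mem_singleton.mp hd'
  have hinj : U.card ≤ F.card := by
    refine Finset.card_le_card_of_injOn P (fun α hα => hF1 _ (hpathsub _ (hP1 α hα))) ?_
    intro α hα β hβ he
    apply Encodable.encode_injective
    rw [← hP3 α (Finset.mem_coe.mp hα), ← hP3 β (Finset.mem_coe.mp hβ), he]
  exact le_trans hinj hFC

end DirA

end Aux

/-- **Theorem 3.** For an integer `k ≥ 2`, a bounded complexity measure `ψ` and a nontrivial
closed class `A ⊆ M_k^∞`, the function `H^∞_{ψ,A}` is everywhere defined if and only if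
the function `L_{ψ,A}` is everywhere defined. -/
theorem stmt0 {k : ℕ} (hk : 2 ≤ k) (ψ : BCM) (A : Set (Table k))
    (hclosed : IsClosedClass A) (hnontriv : NontrivialClass A) :
    (∀ n, (HSet ψ.toPBCM A n).Finite) ↔ (∀ n, (LSet ψ.toPBCM A n).Finite) := by
  constructor
  · intro h n
    exact dirA hk ψ A hclosed n (h n)
  · intro h n
    exact dirB hk ψ A n (h n)
end

section
/- Let k ≥ 2 be an integer, ψ a bounded complexity measure, A a nontrivial closed class of decision tables from M_k^∞, and suppose the function H^∞_{ψ,A} is everywhere defined. Then H^∞_{ψ,A} is nondecreasing and H^∞_{ψ,A}(0) = 0. Moreover: (a) if the function ψ^d is bounded from above on A, then there exists a constant c ∈ ℕ such that H^∞_{ψ,A}(n) ≤ c for all n ∈ ℕ; (b) if ψ^d is not bounded from above on A, then there exists an infinite subset D of ℕ such that H^∞_{ψ,A}(n) ≥ H_D(n) for all n ∈ ℕ. -/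
open Classical

lemma dtree_paths_finite {k : ℕ} : ∀ t : DTree k, t.paths.Finite
  | DTree.leaf _ => Set.finite_singleton _
  | DTree.node a n lab ch =>
      Set.finite_iUnion fun i => (dtree_paths_finite (ch i)).image _

lemma ktree_paths_finite {k : ℕ} (Γ : KTree k) : Γ.paths.Finite :=
  Set.finite_iUnion fun i => dtree_paths_finite _

lemma treeComp_vals_finite {k : ℕ} (ψ : PBCM) (Γ : KTree k) :
    {c | ∃ p ∈ Γ.paths, ψ.onWord p.1 = c}.Finite := by
  have h : {c | ∃ p ∈ Γ.paths, ψ.onWord p.1 = c}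
      = (fun p : List (ℕ × ℕ) × ℕ => ψ.onWord p.1) '' Γ.paths := rfl
  rw [h]
  exact (ktree_paths_finite Γ).image _

lemma psiD_eq_zero_of_psiA_le_zero {k : ℕ} (ψ : BCM) (T : Table k)
    (hT : psiA ψ.toPBCM T ≤ 0) : psiD ψ.toPBCM T = 0 := by
  set S : Set ℕ := {c | ∃ Γ : KTree k, isNDT T Γ ∧ treeComp ψ.toPBCM Γ = c} with hSdef
  by_cases hS : S.Nonempty
  · -- there is an NDT of complexity 0
    have hmem : (0 : ℕ) ∈ S := by
      have h1 : sInf S ∈ S := Nat.sInf_mem hS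
      have h2 : sInf S = 0 := Nat.le_zero.mp hT
      rwa [h2] at h1
    obtain ⟨Γ, hNDT, hcomp⟩ := hmem
    obtain ⟨hne, hwf, hattrs, hcov, hcorr⟩ := hNDT
    obtain ⟨r, hr⟩ := hne
    obtain ⟨p, hp, hsat⟩ := hcov r hr
    have hle : ψ.toPBCM.onWord p.1 ≤ treeComp ψ.toPBCM Γ :=
      le_csSup (treeComp_vals_finite ψ.toPBCM Γ).bddAbove ⟨p, hp, rfl⟩
    rw [hcomp] at hle
    have hword : p.1 = [] := by
      have := (ψ.toPBCM.pos (p.1.map Prod.fst)).mp (Nat.le_zero.mp hle)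
      exact List.map_eq_nil_iff.mp this
    have hrow : ∀ r' ∈ T.rows, r' ∈ (T.applyWord []).rows := by
      intro r' hr'
      simp [Table.applyWord, Table.rowSat, hr']
    have hcom : ∀ r' ∈ T.rows, p.2 ∈ T.dec r' := by
      rcases hcorr p hp with h | h
      · rw [hword] at h
        exact absurd (hrow r hr) (by simp [h])
      · intro r' hr'
        have := h r' (by rw [hword]; exact hrow r' hr')
        exact this
    -- build the one-leaf deterministic tree
    set Γ₀ : KTree k := ⟨0, fun _ => DTree.leaf p.2⟩ with hΓ₀
    have hpaths : Γ₀.paths = {([], p.2)} := by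
      simp [KTree.paths, DTree.paths, hΓ₀, Γ₀]
    have hDDT : isDDT T Γ₀ := by
      refine ⟨⟨⟨r, hr⟩, fun i => trivial, ?_, ?_, ?_⟩, rfl, fun i => trivial⟩
      · simp [KTree.attrs, hΓ₀, DTree.attrs, Γ₀]
      · intro r' hr'
        refine ⟨([], p.2), by rw [hpaths]; rfl, ?_⟩
        intro q hq; exact absurd hq List.not_mem_nil
      · intro q hq
        rw [hpaths, Set.mem_singleton_iff] at hq
        subst hq
        right
        intro r' hr'
        exact hcom r' (Finset.mem_filter.mp hr').1
    have hcomp0 : treeComp ψ.toPBCM Γ₀ = 0 := by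
      have hset : {c | ∃ q ∈ Γ₀.paths, ψ.toPBCM.onWord q.1 = c} = {0} := by
        ext c
        simp only [hpaths, Set.mem_singleton_iff, Set.mem_setOf_eq]
        constructor
        · rintro ⟨q, hq, hc⟩
          subst hq
          rw [← hc]
          exact (ψ.toPBCM.pos []).mpr rfl
        · rintro rfl
          exact ⟨([], p.2), rfl, (ψ.toPBCM.pos []).mpr rfl⟩
      rw [treeComp, hset, csSup_singleton]
    have : psiD ψ.toPBCM T ≤ 0 := Nat.sInf_le ⟨Γ₀, hDDT, hcomp0⟩
    exact Nat.le_zero.mp this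
  · -- no NDT at all, so no DDT either
    have hempty : {c | ∃ Γ : KTree k, isDDT T Γ ∧ treeComp ψ.toPBCM Γ = c} = ∅ := by
      rw [Set.eq_empty_iff_forall_notMem]
      rintro c ⟨Γ, hΓ, hc⟩
      exact hS ⟨c, Γ, hΓ.1, hc⟩
    rw [psiD, hempty, Nat.sInf_empty]

/-- **Theorem 4.** If `H^∞_{ψ,A}` is everywhere defined then it is nondecreasing,
`H^∞_{ψ,A}(0) = 0`, and: (a) if `ψ^d` is bounded from above on `A` then `H^∞_{ψ,A}` is
bounded by a constant; (b) otherwise there is an infinite `D ⊆ ℕ` with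
`H^∞_{ψ,A}(n) ≥ H_D(n)` for all `n`. -/
theorem stmt1 {k : ℕ} (hk : 2 ≤ k) (ψ : BCM) (A : Set (Table k))
    (hclosed : IsClosedClass A) (hnontriv : NontrivialClass A)
    (hH : ∀ n, (HSet ψ.toPBCM A n).Finite) :
    Monotone (Hfun ψ.toPBCM A) ∧ Hfun ψ.toPBCM A 0 = 0 ∧
    ((∃ c, ∀ T ∈ A, psiD ψ.toPBCM T ≤ c) → ∃ c, ∀ n, Hfun ψ.toPBCM A n ≤ c) ∧
    (¬ (∃ c, ∀ T ∈ A, psiD ψ.toPBCM T ≤ c) →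
      ∃ D : Set ℕ, D.Infinite ∧ ∀ n, HDfun D n ≤ Hfun ψ.toPBCM A n) := by
  refine ⟨?_, ?_, ?_, ?_⟩
  · -- monotone
    intro n m hnm
    rcases Set.eq_empty_or_nonempty (HSet ψ.toPBCM A n) with h | h
    · rw [Hfun, h, csSup_empty]
      exact bot_le
    · refine csSup_le_csSup (hH m).bddAbove h ?_
      rintro c ⟨T, hTA, h1, h2⟩
      exact ⟨T, hTA, h1.trans hnm, h2⟩
  · -- H(0) = 0
    have hub : ∀ c ∈ HSet ψ.toPBCM A 0, c ≤ 0 := by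
      rintro c ⟨T, hTA, h1, h2⟩
      rw [← h2, psiD_eq_zero_of_psiA_le_zero ψ T h1]
    exact Nat.le_zero.mp (csSup_le' hub)
  · -- (a)
    rintro ⟨c, hc⟩
    refine ⟨c, fun n => csSup_le' ?_⟩
    rintro d ⟨T, hTA, _, h2⟩
    rw [← h2]
    exact hc T hTA
  · -- (b)
    intro hub
    push_neg at hub
    refine ⟨{d | ∃ T ∈ A, psiD ψ.toPBCM T = d}, ?_, ?_⟩
    · apply Set.infinite_of_not_bddAbove
      rintro ⟨c, hc⟩
      obtain ⟨T, hTA, hT⟩ := hub c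
      exact absurd (hc ⟨T, hTA, rfl⟩) (not_le.mpr hT)
    · intro n
      apply csSup_le'
      rintro d ⟨⟨T, hTA, hd⟩, hdn⟩
      by_cases hd0 : d = 0
      · rw [hd0]; exact Nat.zero_le _
      · have hSne : {c | ∃ Γ : KTree k, isDDT T Γ ∧ treeComp ψ.toPBCM Γ = c}.Nonempty := by
          by_contra hSe
          rw [Set.not_nonempty_iff_eq_empty] at hSe
          rw [← hd, psiD, hSe, Nat.sInf_empty] at hd0
          exact hd0 rfl
        obtain ⟨Γ, hDDT, hΓ⟩ := Nat.sInf_mem hSne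
        have hΓd : treeComp ψ.toPBCM Γ = d := by rw [hΓ, ← psiD, hd]
        have hpsiA : psiA ψ.toPBCM T ≤ n := by
          have h1 : psiA ψ.toPBCM T ≤ treeComp ψ.toPBCM Γ :=
            Nat.sInf_le ⟨Γ, hDDT.1, rfl⟩
          rw [hΓd] at h1
          exact h1.trans hdn
        exact le_csSup (hH n).bddAbove ⟨T, hTA, hpsiA, hd⟩
end

section
/- Let k ≥ 2 be an integer and let φ : ℕ → ℕ be a nondecreasing function such that φ(n) ≥ n for all n ∈ ℕ and φ(0) = 0. Then there exist a nontrivial closed class A of decision tables from M_k^∞ and a bounded complexity measure ψ such that the function H^∞_{ψ,A} is everywhere defined and φ(n) ≤ H^∞_{ψ,A}(n) ≤ φ(n) + n for all n ∈ ℕ. -/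
open Classical

noncomputable section Stmt2Aux

namespace S2

/-- weight of an attribute -/
def wfun (a : ℕ) : ℕ := max a.unpair.1 1

lemma one_le_wfun (a : ℕ) : 1 ≤ wfun a := le_max_right _ _

lemma wfun_pair (n i : ℕ) (hn : 1 ≤ n) : wfun (Nat.pair n i) = n := by
  simp only [wfun, Nat.unpair_pair]
  omega

/-- the weighted-sum bounded complexity measure -/
def psiW : BCM where
  toFun := fun α => (α.map wfun).sum
  pos := by
    intro α
    constructor
    · intro h
      cases α with
      | nil => rfl
      | cons a l =>
        exfalso
        have h1 := one_le_wfun a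
        simp only [List.map_cons, List.sum_cons] at h
        omega
    · rintro rfl; simp
  perm := fun α β h => (h.map wfun).sum_eq
  mono := by
    intro α β
    simp only [List.map_append, List.sum_append]
    exact Nat.le_add_right _ _
  subadd := by
    intro α β
    simp [List.map_append, List.sum_append]
  bdd := by
    intro α
    show α.length ≤ (α.map wfun).sum
    induction α with
    | nil => simp
    | cons a l ih =>
      have := one_le_wfun a
      simp only [List.map_cons, List.sum_cons, List.length_cons]
      omega

lemma psiW_onWord (α : List (ℕ × ℕ)) :
    psiW.toPBCM.onWord α = ((α.map Prod.fst).map wfun).sum := rfl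

def erow (a : ℕ) : ℕ → ℕ := fun i => if i = a then 1 else 0

def zrow : ℕ → ℕ := fun _ => 0

lemma erow_self (a : ℕ) : erow a a = 1 := by simp [erow]

lemma erow_eq_one {a i : ℕ} (h : erow a i = 1) : i = a := by
  by_contra hc; simp [erow, hc] at h

lemma erow_le_one (a i : ℕ) : erow a i ≤ 1 := by
  unfold erow; split <;> omega

def blk (n M : ℕ) : Finset ℕ := (Finset.range (M+1)).image (Nat.pair n)

lemma pair_inj (n : ℕ) : Function.Injective (Nat.pair n) := by
  intro i j h
  have := congrArg Nat.unpair h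
  simpa [Nat.unpair_pair] using this

lemma blk_card (n M : ℕ) : (blk n M).card = M + 1 := by
  rw [blk, Finset.card_image_of_injective _ (pair_inj n), Finset.card_range]

lemma wfun_blk {n M a : ℕ} (hn : 1 ≤ n) (ha : a ∈ blk n M) : wfun a = n := by
  rcases Finset.mem_image.mp ha with ⟨i, _, rfl⟩
  exact wfun_pair n i hn

/-- the basic table `T_{n,M}` with attributes `blk n M`, rows `erow a`, decisions `{a}` -/
def tbl (k : ℕ) (hk : 2 ≤ k) (n M : ℕ) : Table k where
  attrs := blk n M
  rows := (blk n M).image erow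
  dec := fun r => (blk n M).filter (fun i => r i = 1)
  rows_mem := by
    intro r hr
    rcases Finset.mem_image.mp hr with ⟨a, ha, rfl⟩
    constructor
    · intro i _
      have := erow_le_one a i
      omega
    · intro i hi
      have : i ≠ a := fun h => hi (h ▸ ha)
      simp [erow, this]
  dec_nonempty := by
    intro r hr
    rcases Finset.mem_image.mp hr with ⟨a, ha, rfl⟩
    exact ⟨a, Finset.mem_filter.mpr ⟨ha, erow_self a⟩⟩

lemma tbl_dec_erow {k : ℕ} (hk : 2 ≤ k) {n M a : ℕ} (ha : a ∈ blk n M) :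
    (tbl k hk n M).dec (erow a) = {a} := by
  ext i
  simp only [tbl, Finset.mem_filter, Finset.mem_singleton]
  constructor
  · rintro ⟨_, h⟩; exact erow_eq_one h
  · rintro rfl; exact ⟨ha, erow_self _⟩

/-! ### general lemmas about trees -/

lemma dpaths_finite {k : ℕ} (t : DTree k) : t.paths.Finite := by
  induction t with
  | leaf d => exact Set.finite_singleton _
  | node a m lab ch ih =>
    exact Set.finite_iUnion (fun i => ((ih i).image _))

lemma kpaths_finite {k : ℕ} (Γ : KTree k) : Γ.paths.Finite :=
  Set.finite_iUnion (fun i => dpaths_finite _)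

lemma dpaths_nonempty {k : ℕ} (t : DTree k) : t.paths.Nonempty := by
  induction t with
  | leaf d => exact ⟨_, rfl⟩
  | node a m lab ch ih =>
    rcases ih 0 with ⟨p, hp⟩
    exact ⟨_, Set.mem_iUnion.mpr ⟨0, Set.mem_image_of_mem _ hp⟩⟩

lemma dpaths_attrs {k : ℕ} (t : DTree k) :
    ∀ p ∈ t.paths, ∀ q ∈ p.1, q.1 ∈ t.attrs := by
  induction t with
  | leaf d =>
    rintro p hp q hq
    rcases hp with rfl
    simp at hq
  | node a m lab ch ih =>
    rintro p hp q hq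
    rcases Set.mem_iUnion.mp hp with ⟨i, hi⟩
    rcases hi with ⟨p', hp', rfl⟩
    simp only [List.mem_cons] at hq
    rcases hq with rfl | hq
    · exact Finset.mem_insert_self _ _
    · exact Finset.mem_insert_of_mem (Finset.mem_biUnion.mpr
        ⟨i, Finset.mem_univ _, ih i p' hp' q hq⟩)

lemma kpaths_attrs {k : ℕ} (Γ : KTree k) :
    ∀ p ∈ Γ.paths, ∀ q ∈ p.1, q.1 ∈ Γ.attrs := by
  rintro p hp q hq
  rcases Set.mem_iUnion.mp hp with ⟨i, hi⟩
  exact Finset.mem_biUnion.mpr ⟨i, Finset.mem_univ _, dpaths_attrs _ p hi q hq⟩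

def compSet {k : ℕ} (ψ : PBCM) (Γ : KTree k) : Set ℕ :=
  {c | ∃ p ∈ Γ.paths, ψ.onWord p.1 = c}

lemma compSet_eq_image {k : ℕ} (ψ : PBCM) (Γ : KTree k) :
    compSet ψ Γ = (fun p : List (ℕ × ℕ) × ℕ => ψ.onWord p.1) '' Γ.paths := rfl

lemma compSet_finite {k : ℕ} (ψ : PBCM) (Γ : KTree k) : (compSet ψ Γ).Finite := by
  rw [compSet_eq_image]; exact (kpaths_finite Γ).image _

lemma le_treeComp {k : ℕ} (ψ : PBCM) (Γ : KTree k) {p : List (ℕ × ℕ) × ℕ}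
    (hp : p ∈ Γ.paths) : ψ.onWord p.1 ≤ treeComp ψ Γ :=
  le_csSup (compSet_finite ψ Γ).bddAbove ⟨p, hp, rfl⟩

lemma treeComp_le {k : ℕ} (ψ : PBCM) (Γ : KTree k) {B : ℕ}
    (h : ∀ p ∈ Γ.paths, ψ.onWord p.1 ≤ B) : treeComp ψ Γ ≤ B := by
  rcases Set.eq_empty_or_nonempty (compSet ψ Γ) with he | hne
  · unfold treeComp
    have : {c | ∃ p ∈ Γ.paths, PBCM.onWord ψ p.1 = c} = (∅ : Set ℕ) := he
    rw [this]
    simp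
  · exact csSup_le hne (by rintro c ⟨p, hp, rfl⟩; exact h p hp)

/-! ### the chain (deterministic) tree -/

def pick (s : Finset ℕ) : ℕ := if h : s.Nonempty then s.min' h else 0

lemma pick_mem {s : Finset ℕ} (h : s.Nonempty) : pick s ∈ s := by
  unfold pick
  rw [dif_pos h]
  exact s.min'_mem h

def chain {k : ℕ} (dfun : ℕ → ℕ) (d₀ : ℕ) : List ℕ → DTree k
  | [] => .leaf d₀
  | a :: L => .node a 1 (fun i => i.val)
      (fun i => if i.val = 0 then chain dfun d₀ L else .leaf (dfun a))

lemma chain_wf {k : ℕ} (hk : 2 ≤ k) (dfun : ℕ → ℕ) (d₀ : ℕ) :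
    ∀ L : List ℕ, (chain (k := k) dfun d₀ L).wf := by
  intro L
  induction L with
  | nil => trivial
  | cons a L ih =>
    refine ⟨fun i => lt_of_lt_of_le i.isLt hk, fun i => ?_⟩
    show (if (i : ℕ) = 0 then chain dfun d₀ L else DTree.leaf (dfun a)).wf
    by_cases h : (i : ℕ) = 0
    · rw [if_pos h]; exact ih
    · rw [if_neg h]; trivial

lemma chain_det {k : ℕ} (dfun : ℕ → ℕ) (d₀ : ℕ) :
    ∀ L : List ℕ, (chain (k := k) dfun d₀ L).det := by
  intro L
  induction L with
  | nil => trivial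
  | cons a L ih =>
    refine ⟨fun i j h => Fin.val_injective h, fun i => ?_⟩
    show (if (i : ℕ) = 0 then chain dfun d₀ L else DTree.leaf (dfun a)).det
    by_cases h : (i : ℕ) = 0
    · rw [if_pos h]; exact ih
    · rw [if_neg h]; trivial

lemma chain_attrs {k : ℕ} (dfun : ℕ → ℕ) (d₀ : ℕ) :
    ∀ L : List ℕ, (chain (k := k) dfun d₀ L).attrs ⊆ L.toFinset := by
  intro L
  induction L with
  | nil => simp [chain, DTree.attrs]
  | cons a L ih =>
    intro x hx
    simp only [chain, DTree.attrs, Finset.mem_insert, Finset.mem_biUnion] at hx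
    rcases hx with rfl | ⟨i, _, hi⟩
    · simp
    · by_cases h : i.val = 0
      · simp only [h, if_pos] at hi
        simp only [List.toFinset_cons, Finset.mem_insert]
        exact Or.inr (ih hi)
      · simp only [h, if_neg, if_false] at hi
        simp [DTree.attrs] at hi
lemma mem_chain_paths_zero {k : ℕ} (dfun : ℕ → ℕ) (d₀ : ℕ) :
    ∀ L : List ℕ, ((L.map (fun a => (a, 0)), d₀) : List (ℕ × ℕ) × ℕ)
      ∈ (chain (k := k) dfun d₀ L).paths := by
  intro L
  induction L with
  | nil => exact rfl
  | cons a L ih =>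
    simp only [chain, DTree.paths]
    refine Set.mem_iUnion.mpr ⟨0, ?_⟩
    exact ⟨(L.map (fun a => (a, 0)), d₀), by simpa using ih, rfl⟩

lemma mem_chain_paths_one {k : ℕ} (dfun : ℕ → ℕ) (d₀ : ℕ) :
    ∀ L L₁ : List ℕ, ∀ a L₂, L = L₁ ++ a :: L₂ →
      ((L₁.map (fun a => (a, 0)) ++ [(a, 1)], dfun a) : List (ℕ × ℕ) × ℕ)
        ∈ (chain (k := k) dfun d₀ L).paths := by
  intro L
  induction L with
  | nil => intro L₁ a L₂ h; exact absurd h (by simp)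
  | cons b L ih =>
    intro L₁ a L₂ h
    cases L₁ with
    | nil =>
      simp only [List.nil_append, List.cons.injEq] at h
      obtain ⟨rfl, rfl⟩ := h
      simp only [chain, DTree.paths]
      refine Set.mem_iUnion.mpr ⟨1, ?_⟩
      exact ⟨([], dfun b), by simp [DTree.paths], by simp⟩
    | cons c L₁' =>
      simp only [List.cons_append, List.cons.injEq] at h
      obtain ⟨rfl, h⟩ := h
      simp only [chain, DTree.paths]
      refine Set.mem_iUnion.mpr ⟨0, ?_⟩
      exact ⟨(L₁'.map (fun a => (a, 0)) ++ [(a, 1)], dfun a),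
        by simpa using ih L₁' a L₂ h, by simp⟩

lemma chain_shape {k : ℕ} (dfun : ℕ → ℕ) (d₀ : ℕ) :
    ∀ L : List ℕ, ∀ p ∈ (chain (k := k) dfun d₀ L).paths,
      (p.1 = L.map (fun a => (a, 0)) ∧ p.2 = d₀) ∨
      ∃ a L₁ L₂, L = L₁ ++ a :: L₂ ∧
        p.1 = L₁.map (fun a => (a, 0)) ++ [(a, 1)] ∧ p.2 = dfun a := by
  intro L
  induction L with
  | nil =>
    intro p hp
    rcases hp with rfl
    exact Or.inl ⟨rfl, rfl⟩
  | cons b L ih =>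
    intro p hp
    simp only [chain, DTree.paths] at hp
    rcases Set.mem_iUnion.mp hp with ⟨i, hi⟩
    rcases hi with ⟨q, hq, rfl⟩
    by_cases h : i.val = 0
    · simp only [h, if_pos] at hq
      have hlab : (i : ℕ) = 0 := h
      rcases ih q hq with ⟨h1, h2⟩ | ⟨a, L₁, L₂, hL, h1, h2⟩
      · exact Or.inl ⟨by simp [h1, hlab], h2⟩
      · exact Or.inr ⟨a, b :: L₁, L₂, by simp [hL], by simp [h1, hlab], h2⟩
    · simp only [h, if_neg, if_false] at hq
      rcases hq with rfl
      have hlab : (i : ℕ) = 1 := by omega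
      exact Or.inr ⟨b, [], L, rfl, by simp [hlab], rfl⟩

lemma chain_cover {k : ℕ} (dfun : ℕ → ℕ) (d₀ : ℕ) :
    ∀ L : List ℕ, ∀ r : ℕ → ℕ, (∀ a ∈ L, r a ≤ 1) →
      ∃ p ∈ (chain (k := k) dfun d₀ L).paths, Table.rowSat r p.1 := by
  intro L
  induction L with
  | nil =>
    intro r _
    exact ⟨([], d₀), rfl, by intro q hq; simp at hq⟩
  | cons a L ih =>
    intro r hr
    have ha : r a ≤ 1 := hr a (by simp)
    rcases Nat.lt_or_ge (r a) 1 with h1 | h1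
    · have h0 : r a = 0 := by omega
      rcases ih r (fun b hb => hr b (by simp [hb])) with ⟨q, hq, hsat⟩
      refine ⟨((a, 0) :: q.1, q.2), ?_, ?_⟩
      · simp only [chain, DTree.paths]
        exact Set.mem_iUnion.mpr ⟨0, ⟨q, by simpa using hq, by simp⟩⟩
      · intro x hx
        rcases List.mem_cons.mp hx with rfl | hx
        · exact h0
        · exact hsat x hx
    · have h0 : r a = 1 := by omega
      refine ⟨([(a, 1)], dfun a), ?_, ?_⟩
      · simp only [chain, DTree.paths]
        exact Set.mem_iUnion.mpr ⟨1, ⟨([], dfun a), by simp [DTree.paths], by simp⟩⟩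
      · intro x hx
        simp only [List.mem_singleton] at hx
        subst hx
        exact h0

lemma kpaths_mk0 {k : ℕ} (t : DTree k) :
    (KTree.mk 0 (fun _ => t)).paths = t.paths := by
  simp only [KTree.paths]
  exact Set.iUnion_const _

lemma sum_map_const {l : List ℕ} {f : ℕ → ℕ} {c : ℕ} (h : ∀ x ∈ l, f x = c) :
    (l.map f).sum = c * l.length := by
  induction l with
  | nil => simp
  | cons a l ih =>
    simp only [List.map_cons, List.sum_cons, List.length_cons,
      h a (by simp), ih (fun x hx => h x (by simp [hx])), Nat.mul_succ]
    omega

lemma fst_zero_map (L : List ℕ) :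
    ((L.map (fun a => ((a : ℕ), (0 : ℕ)))).map Prod.fst) = L := by
  induction L with
  | nil => rfl
  | cons a l ih => simp [ih]

lemma rowSat_nil (r : ℕ → ℕ) : Table.rowSat r [] := by
  intro q hq; simp at hq

lemma applyWord_nil_rows {k : ℕ} (Q : Table k) : (Q.applyWord []).rows = Q.rows := by
  simp only [Table.applyWord]
  exact Finset.filter_true_of_mem (fun r _ => rowSat_nil r)

/-- the chain tree is a deterministic decision tree of bounded complexity -/
lemma chain_isDDT {k : ℕ} (hk : 2 ≤ k) (Q : Table k) (L : List ℕ)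
    (hLa : ∀ a ∈ L, a ∈ Q.attrs)
    (hne : Q.rows.Nonempty)
    (hval : ∀ r ∈ Q.rows, ∀ a, r a ≤ 1)
    (hone : ∀ r ∈ Q.rows, ∀ a, r a = 1 → r = erow a)
    (d₀ : ℕ) (hd₀ : ∀ r ∈ Q.rows, (∀ b ∈ L, r b = 0) → d₀ ∈ Q.dec r) :
    ∃ Γ : KTree k, isDDT Q Γ ∧ treeComp psiW.toPBCM Γ ≤ (L.map wfun).sum := by
  classical
  set dfun : ℕ → ℕ := fun a => pick (Q.dec (erow a)) with hdfun
  refine ⟨⟨0, fun _ => chain dfun d₀ L⟩, ⟨⟨hne, ?_, ?_, ?_, ?_⟩, rfl, ?_⟩, ?_⟩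
  · intro i; exact chain_wf hk dfun d₀ L
  · intro x hx
    rcases Finset.mem_biUnion.mp hx with ⟨i, _, hi⟩
    exact hLa x (List.mem_toFinset.mp (chain_attrs dfun d₀ L hi))
  · intro r hr
    rcases chain_cover dfun d₀ L r (fun a _ => hval r hr a) with ⟨p, hp, hsat⟩
    exact ⟨p, (kpaths_mk0 _).symm ▸ hp, hsat⟩
  · intro p hp
    rw [kpaths_mk0] at hp
    rcases chain_shape dfun d₀ L p hp with ⟨h1, h2⟩ | ⟨a, L₁, L₂, hL, h1, h2⟩
    · right
      intro r hr
      have hrr : r ∈ Q.rows := (Finset.mem_filter.mp hr).1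
      have hsat : Table.rowSat r p.1 := (Finset.mem_filter.mp hr).2
      have hz : ∀ b ∈ L, r b = 0 := by
        intro b hb
        exact hsat (b, 0) (by rw [h1]; exact List.mem_map.mpr ⟨b, hb, rfl⟩)
      rw [h2]
      exact hd₀ r hrr hz
    · right
      intro r hr
      have hrr : r ∈ Q.rows := (Finset.mem_filter.mp hr).1
      have hsat : Table.rowSat r p.1 := (Finset.mem_filter.mp hr).2
      have hra : r a = 1 := hsat (a, 1) (by rw [h1]; simp)
      have hre : r = erow a := hone r hrr a hra
      rw [h2]
      show pick (Q.dec (erow a)) ∈ Q.dec r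
      rw [← hre]
      exact pick_mem (Q.dec_nonempty r hrr)
  · intro i; exact chain_det dfun d₀ L
  · apply treeComp_le
    intro p hp
    rw [kpaths_mk0] at hp
    rcases chain_shape dfun d₀ L p hp with ⟨h1, _⟩ | ⟨a, L₁, L₂, hL, h1, _⟩
    · rw [psiW_onWord, h1, fst_zero_map]
    · rw [psiW_onWord, h1]
      have h3 : ((L₁.map (fun a => ((a : ℕ), (0 : ℕ))) ++ [(a, 1)]).map Prod.fst)
          = L₁ ++ [a] := by rw [List.map_append, fst_zero_map]; rfl
      rw [h3, hL]
      simp only [List.map_append, List.sum_append, List.map_cons, List.sum_cons,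
        List.map_nil, List.sum_nil]
      omega

/-! ### the lower bound for deterministic trees -/

lemma lb {k : ℕ} : ∀ t : DTree k, t.det → ∀ S : Finset ℕ, S.Nonempty →
    (∀ a ∈ S, ∃ p ∈ t.paths, Table.rowSat (erow a) p.1) →
    (∀ p ∈ t.paths, ∀ a ∈ S, Table.rowSat (erow a) p.1 → p.2 = a) →
    ∃ p ∈ t.paths, S.card - 1 ≤ p.1.length := by
  intro t
  induction t with
  | leaf d =>
    intro _ S hS hcov hdec
    have hcard : S.card ≤ 1 := by
      by_contra hc
      have hlt : 1 < S.card := by omega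
      rcases Finset.one_lt_card.mp hlt with ⟨a, ha, b, hb, hab⟩
      have h1 : d = a := hdec ([], d) rfl a ha (rowSat_nil _)
      have h2 : d = b := hdec ([], d) rfl b hb (rowSat_nil _)
      exact hab (h1 ▸ h2)
    exact ⟨([], d), rfl, by simp only [List.length_nil]; omega⟩
  | node a m lab ch ih =>
    intro hdet S hS hcov hdec
    obtain ⟨hinj, hchdet⟩ := hdet
    rcases Finset.eq_empty_or_nonempty (S.erase a) with hS0 | hS0
    · -- S = {a}
      have haS : a ∈ S := by
        rcases hS with ⟨x, hx⟩
        by_cases hxa : x = a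
        · exact hxa ▸ hx
        · exact absurd (Finset.mem_erase.mpr ⟨hxa, hx⟩) (by simp [hS0])
      rcases hcov a haS with ⟨p, hp, hsat⟩
      refine ⟨p, hp, ?_⟩
      have : S.card ≤ 1 := by
        by_contra hc
        have hlt : 1 < S.card := by omega
        rcases Finset.one_lt_card.mp hlt with ⟨x, hx, y, hy, hxy⟩
        have hxa : x = a := by
          by_contra h
          exact absurd (Finset.mem_erase.mpr ⟨h, hx⟩) (by simp [hS0])
        have hya : y = a := by
          by_contra h
          exact absurd (Finset.mem_erase.mpr ⟨h, hy⟩) (by simp [hS0])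
        exact hxy (hxa.trans hya.symm)
      omega
    · -- there is b ∈ S, b ≠ a
      rcases hS0 with ⟨b, hb⟩
      have hbS : b ∈ S := Finset.mem_of_mem_erase hb
      have hba : b ≠ a := (Finset.mem_erase.mp hb).1
      have heb : erow b a = 0 := by simp [erow, Ne.symm hba]
      rcases hcov b hbS with ⟨p, hp, hsat⟩
      rcases Set.mem_iUnion.mp hp with ⟨i₀, hi₀⟩
      rcases hi₀ with ⟨q, hq, rfl⟩
      have hlab0 : lab i₀ = 0 := by
        have := hsat (a, lab i₀) (by simp)
        rw [heb] at this
        exact this.symm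
      -- apply the IH to child i₀ with S.erase a
      have hcov' : ∀ c ∈ S.erase a, ∃ p ∈ (ch i₀).paths, Table.rowSat (erow c) p.1 := by
        intro c hc
        have hcS : c ∈ S := Finset.mem_of_mem_erase hc
        have hca : c ≠ a := (Finset.mem_erase.mp hc).1
        rcases hcov c hcS with ⟨p', hp', hsat'⟩
        rcases Set.mem_iUnion.mp hp' with ⟨i', hi'⟩
        rcases hi' with ⟨q', hq', rfl⟩
        have : lab i' = 0 := by
          have := hsat' (a, lab i') (by simp)
          rw [show erow c a = 0 by simp [erow, Ne.symm hca]] at this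
          exact this.symm
        have hii : i' = i₀ := hinj (this.trans hlab0.symm)
        subst hii
        refine ⟨q', hq', ?_⟩
        intro x hx
        exact hsat' x (by simp [hx])
      have hdec' : ∀ p ∈ (ch i₀).paths, ∀ c ∈ S.erase a,
          Table.rowSat (erow c) p.1 → p.2 = c := by
        intro p' hp' c hc hsat'
        have hca : c ≠ a := (Finset.mem_erase.mp hc).1
        have hmem : ((a, lab i₀) :: p'.1, p'.2) ∈ (DTree.node a m lab ch).paths :=
          Set.mem_iUnion.mpr ⟨i₀, ⟨p', hp', by simp⟩⟩
        refine hdec _ hmem c (Finset.mem_of_mem_erase hc) ?_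
        intro x hx
        rcases List.mem_cons.mp hx with rfl | hx
        · simp [erow, Ne.symm hca, hlab0]
        · exact hsat' x hx
      rcases ih i₀ (hchdet i₀) (S.erase a) ⟨b, hb⟩ hcov' hdec' with ⟨q', hq', hlen⟩
      refine ⟨((a, lab i₀) :: q'.1, q'.2), Set.mem_iUnion.mpr ⟨i₀, ⟨q', hq', by simp⟩⟩, ?_⟩
      have hce : S.card - 1 ≤ (S.erase a).card := by
        by_cases haS : a ∈ S
        · rw [Finset.card_erase_of_mem haS]
        · rw [Finset.erase_eq_of_notMem haS]
          omega
      simp only [List.length_cons]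
      omega

/-! ### closure lemmas -/

lemma tbl_attrs {k : ℕ} (hk : 2 ≤ k) (n M : ℕ) : (tbl k hk n M).attrs = blk n M := rfl

lemma tbl_rows {k : ℕ} (hk : 2 ≤ k) (n M : ℕ) :
    (tbl k hk n M).rows = (blk n M).image erow := rfl

lemma self_mem_closureT {k : ℕ} (T : Table k) : T ∈ Table.closureT T := by
  refine ⟨∅, Finset.empty_subset _, by simp, ?_⟩
  have h : ∀ r ∈ T.rows, (fun i => if i ∈ T.attrs \ (∅ : Finset ℕ) then r i else 0) = r := by
    intro r hr
    funext i
    by_cases hi : i ∈ T.attrs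
    · simp [hi]
    · simp [hi, (T.rows_mem r hr).2 i hi]
  have : T.rows.image (fun r i => if i ∈ T.attrs \ (∅ : Finset ℕ) then r i else 0)
      = T.rows.image id :=
    Finset.image_congr (fun r hr => h r (Finset.mem_coe.mp hr))
  rw [this, Finset.image_id]

lemma closureT_trans {k : ℕ} {T Q : Table k} (hQ : Q ∈ Table.closureT T) :
    Table.closureT Q ⊆ Table.closureT T := by
  rcases hQ with ⟨D, hD, ha, hr⟩
  rintro Q' ⟨D', hD', ha', hr'⟩
  have hD'T : D' ⊆ T.attrs := fun x hx => (Finset.mem_sdiff.mp (ha ▸ hD' hx)).1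
  refine ⟨D ∪ D', Finset.union_subset hD hD'T, ?_, ?_⟩
  · rw [ha', ha]
    ext x
    simp only [Finset.mem_sdiff, Finset.mem_union]
    tauto
  · rw [hr', hr, Finset.image_image]
    apply Finset.image_congr
    intro r _
    funext i
    simp only [Function.comp, ha]
    by_cases h : i ∈ T.attrs \ (D ∪ D')
    · have h2 : i ∈ (T.attrs \ D) \ D' := by
        simp only [Finset.mem_sdiff, Finset.mem_union] at h ⊢
        tauto
      have h1 : i ∈ T.attrs \ D := (Finset.mem_sdiff.mp h2).1
      rw [if_pos h2, if_pos h1, if_pos h]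
    · have h2 : i ∉ (T.attrs \ D) \ D' := by
        simp only [Finset.mem_sdiff, Finset.mem_union] at h ⊢
        tauto
      rw [if_neg h2, if_neg h]

lemma pair_mem_blk {n M i : ℕ} (hi : i ≤ M) : Nat.pair n i ∈ blk n M :=
  Finset.mem_image.mpr ⟨i, Finset.mem_range.mpr (by omega), rfl⟩

lemma clos_anatomy {k : ℕ} {hk : 2 ≤ k} {n M : ℕ} {Q : Table k}
    (hQ : Q ∈ Table.closureT (tbl k hk n M)) :
    Q.attrs ⊆ blk n M ∧
    (∀ r ∈ Q.rows, r = zrow ∨ ∃ a ∈ Q.attrs, r = erow a) ∧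
    (∀ a ∈ Q.attrs, erow a ∈ Q.rows) ∧
    Q.rows.Nonempty ∧
    (zrow ∈ Q.rows → Q.attrs.card ≤ M) := by
  classical
  rcases hQ with ⟨D, hD, ha, hr⟩
  rw [tbl_attrs] at ha hD hr
  rw [tbl_rows] at hr
  set S : Finset ℕ := blk n M \ D with hS
  have hfe : ∀ a : ℕ, (fun i => if i ∈ S then erow a i else 0)
      = if a ∈ S then erow a else zrow := by
    intro a
    by_cases haS : a ∈ S
    · rw [if_pos haS]
      funext i
      by_cases hia : i = a
      · subst hia
        rw [if_pos haS]
      · have : erow a i = 0 := by simp [erow, hia]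
        simp [this]
    · rw [if_neg haS]
      funext i
      by_cases hiS : i ∈ S
      · have hia : i ≠ a := fun h => haS (h ▸ hiS)
        simp [hiS, erow, hia, zrow]
      · simp [hiS, zrow]
  have hrows : ∀ r, r ∈ Q.rows ↔ ∃ a ∈ blk n M, r = if a ∈ S then erow a else zrow := by
    intro r
    rw [hr, Finset.image_image]
    constructor
    · intro h
      rcases Finset.mem_image.mp h with ⟨a, hab, hfa⟩
      refine ⟨a, hab, ?_⟩
      rw [← hfa]
      exact hfe a
    · rintro ⟨a, hab, rfl⟩
      refine Finset.mem_image.mpr ⟨a, hab, ?_⟩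
      exact (hfe a)
  have hQa : Q.attrs = S := ha
  refine ⟨?_, ?_, ?_, ?_, ?_⟩
  · rw [hQa]; exact Finset.sdiff_subset
  · intro r hrm
    rcases (hrows r).mp hrm with ⟨a, hab, rfl⟩
    by_cases haS : a ∈ S
    · right
      exact ⟨a, hQa ▸ haS, by rw [if_pos haS]⟩
    · left
      rw [if_neg haS]
  · intro a haQ
    have haS : a ∈ S := hQa ▸ haQ
    refine (hrows (erow a)).mpr ⟨a, (Finset.mem_sdiff.mp haS).1, ?_⟩
    rw [if_pos haS]
  · refine ⟨if Nat.pair n 0 ∈ S then erow (Nat.pair n 0) else zrow, ?_⟩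
    exact (hrows _).mpr ⟨Nat.pair n 0, pair_mem_blk (Nat.zero_le M), rfl⟩
  · intro hz
    rcases (hrows zrow).mp hz with ⟨a, hab, hza⟩
    have haS : a ∉ S := by
      intro haS
      rw [if_pos haS] at hza
      have := congrFun hza a
      simp [zrow, erow_self] at this
    have hsub : Q.attrs ⊆ (blk n M).erase a := by
      rw [hQa]
      intro x hx
      rcases Finset.mem_sdiff.mp hx with ⟨hxb, hxD⟩
      refine Finset.mem_erase.mpr ⟨?_, hxb⟩
      intro hxa
      exact haS (hxa ▸ hx)
    calc Q.attrs.card ≤ ((blk n M).erase a).card := Finset.card_le_card hsub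
      _ = M := by rw [Finset.card_erase_of_mem hab, blk_card]; omega

/-! ### upper bound on `ψ^d` over the closure -/

lemma clos_psiD_le {k : ℕ} (hk : 2 ≤ k) {n M : ℕ} (hn : 1 ≤ n) {Q : Table k}
    (hQ : Q ∈ Table.closureT (tbl k hk n M)) :
    ∃ Γ : KTree k, isDDT Q Γ ∧ treeComp psiW.toPBCM Γ ≤ n * M := by
  classical
  obtain ⟨hsub, hchar, herow, hne, hcz⟩ := clos_anatomy (hk := hk) hQ
  have hval : ∀ r ∈ Q.rows, ∀ a, r a ≤ 1 := by
    intro r hrm a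
    rcases hchar r hrm with rfl | ⟨b, _, rfl⟩
    · exact Nat.zero_le 1
    · exact erow_le_one b a
  have hone : ∀ r ∈ Q.rows, ∀ a, r a = 1 → r = erow a := by
    intro r hrm a hra
    rcases hchar r hrm with rfl | ⟨b, _, rfl⟩
    · exact absurd hra (by simp [zrow])
    · rw [erow_eq_one hra]
  have hwn : ∀ x ∈ Q.attrs, wfun x = n := fun x hx => wfun_blk hn (hsub hx)
  by_cases hz : zrow ∈ Q.rows
  · set L := Q.attrs.sort (· ≤ ·) with hL
    have hLa : ∀ a ∈ L, a ∈ Q.attrs := fun a haL => (Finset.mem_sort _).mp haL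
    have hd₀ : ∀ r ∈ Q.rows, (∀ b ∈ L, r b = 0) → pick (Q.dec zrow) ∈ Q.dec r := by
      intro r hrm h0
      rcases hchar r hrm with rfl | ⟨b, hb, rfl⟩
      · exact pick_mem (Q.dec_nonempty _ hz)
      · have : erow b b = 0 := h0 b ((Finset.mem_sort _).mpr hb)
        rw [erow_self] at this
        exact absurd this one_ne_zero
    obtain ⟨Γ, hΓ, hcomp⟩ := chain_isDDT hk Q L hLa hne hval hone _ hd₀
    refine ⟨Γ, hΓ, le_trans hcomp ?_⟩
    rw [sum_map_const (fun x hx => hwn x (hLa x hx))]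
    have : L.length = Q.attrs.card := Finset.length_sort _
    rw [this]
    exact Nat.mul_le_mul_left n (hcz hz)
  · have hne2 := hne
    obtain ⟨r₀, hr₀⟩ := hne2
    obtain ⟨a₀, ha₀, _⟩ : ∃ a ∈ Q.attrs, r₀ = erow a := by
      rcases hchar r₀ hr₀ with rfl | h
      · exact absurd hr₀ hz
      · exact h
    set L := (Q.attrs.erase a₀).sort (· ≤ ·) with hL
    have hLa : ∀ a ∈ L, a ∈ Q.attrs := fun a haL =>
      Finset.mem_of_mem_erase ((Finset.mem_sort _).mp haL)
    have hd₀ : ∀ r ∈ Q.rows, (∀ b ∈ L, r b = 0) → pick (Q.dec (erow a₀)) ∈ Q.dec r := by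
      intro r hrm h0
      rcases hchar r hrm with rfl | ⟨b, hb, rfl⟩
      · exact absurd hrm hz
      · have hba : b = a₀ := by
          by_contra hba
          have : erow b b = 0 :=
            h0 b ((Finset.mem_sort _).mpr (Finset.mem_erase.mpr ⟨hba, hb⟩))
          rw [erow_self] at this
          exact absurd this one_ne_zero
        subst hba
        exact pick_mem (Q.dec_nonempty _ (herow b hb))
    obtain ⟨Γ, hΓ, hcomp⟩ := chain_isDDT hk Q L hLa hne hval hone _ hd₀
    refine ⟨Γ, hΓ, le_trans hcomp ?_⟩
    rw [sum_map_const (fun x hx => hwn x (hLa x hx))]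
    have h1 : L.length = (Q.attrs.erase a₀).card := Finset.length_sort _
    have h2 : (Q.attrs.erase a₀).card ≤ M := by
      have h3 : Q.attrs.card ≤ M + 1 := by
        calc Q.attrs.card ≤ (blk n M).card := Finset.card_le_card hsub
          _ = M + 1 := blk_card n M
      rw [Finset.card_erase_of_mem ha₀]
      omega
    rw [h1]
    exact Nat.mul_le_mul_left n h2

/-! ### lower bound on `ψ^d` of the basic table -/

lemma tbl_dec_eq {k : ℕ} (hk : 2 ≤ k) {n M : ℕ} {t : DTree k}
    (ht : ∀ p ∈ t.paths, (((tbl k hk n M).applyWord p.1).rows = ∅ ∨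
      ∀ r ∈ ((tbl k hk n M).applyWord p.1).rows, p.2 ∈ (tbl k hk n M).dec r)) :
    ∀ p ∈ t.paths, ∀ a ∈ blk n M, Table.rowSat (erow a) p.1 → p.2 = a := by
  intro p hp a hab hsat
  have hmem : erow a ∈ ((tbl k hk n M).applyWord p.1).rows :=
    Finset.mem_filter.mpr ⟨Finset.mem_image.mpr ⟨a, hab, rfl⟩, hsat⟩
  rcases ht p hp with hemp | hall
  · rw [hemp] at hmem
    exact absurd hmem (Finset.notMem_empty _)
  · have := hall _ hmem
    rw [tbl_dec_erow hk hab] at this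
    exact Finset.mem_singleton.mp this

lemma tbl_psiD_ge {k : ℕ} (hk : 2 ≤ k) {n M : ℕ} (hn : 1 ≤ n) :
    n * M ≤ psiD psiW.toPBCM (tbl k hk n M) := by
  classical
  have hself := self_mem_closureT (tbl k hk n M)
  obtain ⟨Γ₀, hΓ₀, _⟩ := clos_psiD_le hk hn hself
  have hne : {c | ∃ Γ : KTree k, isDDT (tbl k hk n M) Γ ∧ treeComp psiW.toPBCM Γ = c}.Nonempty :=
    ⟨_, Γ₀, hΓ₀, rfl⟩
  obtain ⟨Γ, hΓ, hceq⟩ := Nat.sInf_mem hne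
  rw [psiD, ← hceq]
  obtain ⟨⟨hrne, hwf, hattrs, hcov, hdec⟩, hn0, hdet⟩ := hΓ
  obtain ⟨nn, sub⟩ := Γ
  have hnn : nn = 0 := hn0
  subst hnn
  have hpaths : (KTree.mk 0 sub).paths = (sub 0).paths := by
    apply Set.Subset.antisymm
    · rintro p hp
      rcases Set.mem_iUnion.mp hp with ⟨i, hi⟩
      exact (Subsingleton.elim (α := Fin 1) i 0 : i = 0) ▸ hi
    · intro p hp
      exact Set.mem_iUnion.mpr ⟨0, hp⟩
  have hdec' : ∀ p ∈ (sub 0).paths, ∀ a ∈ blk n M,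
      Table.rowSat (erow a) p.1 → p.2 = a :=
    tbl_dec_eq hk (fun p hp => hdec p (hpaths ▸ hp))
  have hcov' : ∀ a ∈ blk n M, ∃ p ∈ (sub 0).paths, Table.rowSat (erow a) p.1 := by
    intro a hab
    rcases hcov (erow a) (Finset.mem_image.mpr ⟨a, hab, rfl⟩) with ⟨p, hp, hsat⟩
    exact ⟨p, hpaths ▸ hp, hsat⟩
  obtain ⟨p, hp, hlen⟩ := lb (sub 0) (hdet 0) (blk n M)
    ⟨Nat.pair n 0, pair_mem_blk (Nat.zero_le M)⟩ hcov' hdec'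
  have hwq : ∀ x ∈ p.1.map Prod.fst, wfun x = n := by
    intro x hx
    rcases List.mem_map.mp hx with ⟨q, hq, rfl⟩
    have h1 : q.1 ∈ (sub 0).attrs := dpaths_attrs (sub 0) p hp q hq
    have h2 : q.1 ∈ (KTree.mk 0 sub).attrs :=
      Finset.mem_biUnion.mpr ⟨0, Finset.mem_univ _, h1⟩
    exact wfun_blk hn (hattrs h2)
  have hval : psiW.toPBCM.onWord p.1 = n * p.1.length := by
    rw [psiW_onWord, sum_map_const hwq, List.length_map]
  have hM : M ≤ p.1.length := by
    rw [blk_card] at hlen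
    omega
  calc n * M ≤ n * p.1.length := Nat.mul_le_mul_left n hM
    _ = psiW.toPBCM.onWord p.1 := hval.symm
    _ ≤ treeComp psiW.toPBCM (KTree.mk 0 sub) := le_treeComp _ _ (hpaths ▸ hp)

/-! ### upper bound on `ψ^a` of the basic table -/

lemma guess_paths {k : ℕ} (a : ℕ) :
    (DTree.node (k := k) a 0 (fun _ => 1) (fun _ => DTree.leaf a)).paths
      = {([(a, 1)], a)} := by
  apply Set.Subset.antisymm
  · rintro p hp
    rcases Set.mem_iUnion.mp hp with ⟨i, ⟨q, hq, rfl⟩⟩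
    rcases hq with rfl
    rfl
  · rintro p hp
    rcases hp with rfl
    exact Set.mem_iUnion.mpr ⟨0, ⟨([], a), rfl, rfl⟩⟩

lemma tbl_psiA_le {k : ℕ} (hk : 2 ≤ k) {n M : ℕ} (hn : 1 ≤ n) :
    psiA psiW.toPBCM (tbl k hk n M) ≤ n := by
  classical
  set Γg : KTree k := ⟨M, fun i =>
    DTree.node (Nat.pair n i.val) 0 (fun _ => 1) (fun _ => DTree.leaf (Nat.pair n i.val))⟩
    with hΓg
  have hpaths : ∀ p, p ∈ Γg.paths ↔
      ∃ i : Fin (M + 1), p = ([(Nat.pair n i.val, 1)], Nat.pair n i.val) := by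
    intro p
    constructor
    · intro hp
      rcases Set.mem_iUnion.mp hp with ⟨i, hi⟩
      rw [guess_paths] at hi
      exact ⟨i, hi⟩
    · rintro ⟨i, rfl⟩
      exact Set.mem_iUnion.mpr ⟨i, by rw [guess_paths]; rfl⟩
  have hndt : isNDT (tbl k hk n M) Γg := by
    refine ⟨⟨_, Finset.mem_image.mpr ⟨Nat.pair n 0, pair_mem_blk (Nat.zero_le M), rfl⟩⟩,
      ?_, ?_, ?_, ?_⟩
    · intro i
      exact ⟨fun _ => lt_of_lt_of_le one_lt_two hk, fun _ => trivial⟩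
    · intro x hx
      rcases Finset.mem_biUnion.mp hx with ⟨i, _, hi⟩
      change x ∈ (DTree.node (k := k) (Nat.pair n i.val) 0 (fun _ => 1) (fun _ => DTree.leaf (Nat.pair n i.val))).attrs at hi
      simp only [DTree.attrs, Finset.mem_insert] at hi
      rcases hi with rfl | hi
      · exact pair_mem_blk (Nat.lt_succ_iff.mp i.isLt)
      · rcases Finset.mem_biUnion.mp hi with ⟨_, _, h⟩
        exact absurd h (Finset.notMem_empty _)
    · intro r hrm
      rcases Finset.mem_image.mp hrm with ⟨a, hab, rfl⟩
      rcases Finset.mem_image.mp hab with ⟨i, hi, rfl⟩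
      refine ⟨([(Nat.pair n i, 1)], Nat.pair n i), (hpaths _).mpr
        ⟨⟨i, Finset.mem_range.mp hi⟩, rfl⟩, ?_⟩
      intro q hq
      rcases List.mem_singleton.mp hq with rfl
      exact erow_self _
    · intro p hp
      rcases (hpaths p).mp hp with ⟨i, rfl⟩
      right
      intro r hrm
      obtain ⟨hrt, hsat⟩ := Finset.mem_filter.mp hrm
      have hra : r (Nat.pair n i.val) = 1 :=
        hsat (Nat.pair n i.val, 1) (List.mem_singleton.mpr rfl)
      rcases Finset.mem_image.mp hrt with ⟨b, hbb, rfl⟩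
      have hba : Nat.pair n i.val = b := erow_eq_one hra
      subst hba
      rw [tbl_dec_erow hk (pair_mem_blk (by omega))]
      exact Finset.mem_singleton.mpr rfl
  have hcomp : treeComp psiW.toPBCM Γg ≤ n := by
    apply treeComp_le
    intro p hp
    rcases (hpaths p).mp hp with ⟨i, rfl⟩
    rw [psiW_onWord]
    simp only [List.map_cons, List.map_nil, List.sum_cons, List.sum_nil]
    rw [wfun_pair n i.val hn]
    omega
  exact le_trans (Nat.sInf_le ⟨Γg, hndt, rfl⟩) hcomp

/-! ### small nondeterministic complexity forces a common decision -/

lemma common_of_lowcost {k : ℕ} {Q : Table k} {w : ℕ}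
    (hattr : ∀ a ∈ Q.attrs, wfun a = w) {Γ : KTree k} (hΓ : isNDT Q Γ)
    (hc : treeComp psiW.toPBCM Γ < w) : ∃ d, ∀ r ∈ Q.rows, d ∈ Q.dec r := by
  obtain ⟨hne, hwf, hattrs, hcov, hdec⟩ := hΓ
  obtain ⟨r₀, hr₀⟩ := hne
  obtain ⟨p, hp, hsat⟩ := hcov r₀ hr₀
  cases hp1 : p.1 with
  | cons q rest =>
    exfalso
    have hq : q.1 ∈ Q.attrs := hattrs (kpaths_attrs Γ p hp q (by rw [hp1]; simp))
    have hle : w ≤ psiW.toPBCM.onWord p.1 := by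
      rw [psiW_onWord, hp1]
      simp only [List.map_cons, List.sum_cons]
      rw [hattr q.1 hq]
      omega
    have := lt_of_le_of_lt (hle.trans (le_treeComp _ _ hp)) hc
    omega
  | nil =>
    refine ⟨p.2, ?_⟩
    have hd := hdec p hp
    rw [hp1, applyWord_nil_rows] at hd
    rcases hd with hemp | hall
    · exact absurd hr₀ (hemp ▸ Finset.notMem_empty r₀)
    · exact hall

lemma psiD_zero_of_common {k : ℕ} {Q : Table k} (hne : Q.rows.Nonempty) {d : ℕ}
    (hd : ∀ r ∈ Q.rows, d ∈ Q.dec r) : psiD psiW.toPBCM Q = 0 := by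
  have hmem : (0 : ℕ) ∈ {c | ∃ Γ : KTree k, isDDT Q Γ ∧ treeComp psiW.toPBCM Γ = c} := by
    refine ⟨⟨0, fun _ => DTree.leaf d⟩,
      ⟨⟨hne, fun i => trivial, ?_, ?_, ?_⟩, rfl, fun i => trivial⟩, ?_⟩
    · intro x hx
      rcases Finset.mem_biUnion.mp hx with ⟨i, _, hi⟩
      exact absurd hi (Finset.notMem_empty _)
    · intro r hr
      exact ⟨([], d), by rw [kpaths_mk0]; rfl, rowSat_nil r⟩
    · intro p hp
      rw [kpaths_mk0] at hp
      rcases hp with rfl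
      right
      intro r hr
      rw [applyWord_nil_rows] at hr
      exact hd r hr
    · apply Nat.le_zero.mp
      apply treeComp_le
      intro p hp
      rw [kpaths_mk0] at hp
      rcases hp with rfl
      exact le_refl 0
  exact Nat.eq_zero_of_le_zero (Nat.sInf_le hmem)

lemma clos_psiD_zero {k : ℕ} (hk : 2 ≤ k) {n M : ℕ} (hn : 1 ≤ n) {Q : Table k}
    (hQ : Q ∈ Table.closureT (tbl k hk n M))
    (hlt : psiA psiW.toPBCM Q < n) : psiD psiW.toPBCM Q = 0 := by
  classical
  rcases Set.eq_empty_or_nonempty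
    {c | ∃ Γ : KTree k, isNDT Q Γ ∧ treeComp psiW.toPBCM Γ = c} with hemp | hnea
  · have hded : {c | ∃ Γ : KTree k, isDDT Q Γ ∧ treeComp psiW.toPBCM Γ = c} = ∅ := by
      apply Set.eq_empty_iff_forall_notMem.mpr
      rintro c ⟨Γ, hΓ, hc⟩
      exact Set.eq_empty_iff_forall_notMem.mp hemp c ⟨Γ, hΓ.1, hc⟩
    rw [psiD, hded]
    exact Nat.sInf_empty
  · obtain ⟨Γ, hΓ, hceq⟩ := Nat.sInf_mem hnea
    have hattr : ∀ a ∈ Q.attrs, wfun a = n :=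
      fun a ha => wfun_blk hn ((clos_anatomy (hk := hk) hQ).1 ha)
    have hlow : treeComp psiW.toPBCM Γ < n := by
      rw [hceq]
      exact hlt
    obtain ⟨d, hd⟩ := common_of_lowcost hattr hΓ hlow
    exact psiD_zero_of_common (clos_anatomy (hk := hk) hQ).2.2.2.1 hd

lemma arith {φ : ℕ → ℕ} {n : ℕ} (hn : 1 ≤ n) :
    φ n ≤ n * (φ n / n + 1) ∧ n * (φ n / n + 1) ≤ φ n + n := by
  have h1 : n * (φ n / n) + φ n % n = φ n := Nat.div_add_mod (φ n) n
  have h2 : φ n % n < n := Nat.mod_lt _ hn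
  rw [Nat.mul_succ]
  omega

end S2

end Stmt2Aux

/-- **Theorem 5.** For any nondecreasing `φ : ℕ → ℕ` with `φ(n) ≥ n` and `φ(0) = 0`
there exist a nontrivial closed class `A ⊆ M_k^∞` and a bounded complexity measure `ψ`
such that `H^∞_{ψ,A}` is everywhere defined and `φ(n) ≤ H^∞_{ψ,A}(n) ≤ φ(n) + n`. -/
theorem stmt2 {k : ℕ} (hk : 2 ≤ k) (φ : ℕ → ℕ) (hmono : Monotone φ)
    (hge : ∀ n, n ≤ φ n) (h0 : φ 0 = 0) :
    ∃ (A : Set (Table k)) (ψ : BCM), IsClosedClass A ∧ NontrivialClass A ∧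
      (∀ n, (HSet ψ.toPBCM A n).Finite) ∧
      ∀ n, φ n ≤ Hfun ψ.toPBCM A n ∧ Hfun ψ.toPBCM A n ≤ φ n + n := by
  classical
  set A : Set (Table k) :=
    ⋃ j : ℕ, Table.closureT (S2.tbl k hk (j + 1) (φ (j + 1) / (j + 1) + 1)) with hA
  have hub : ∀ n : ℕ, ∀ c ∈ HSet S2.psiW.toPBCM A n, c ≤ φ n + n := by
    rintro n c ⟨T, hTA, hTa, rfl⟩
    obtain ⟨j, hj⟩ := Set.mem_iUnion.mp hTA
    have hm1 : 1 ≤ j + 1 := Nat.succ_le_succ (Nat.zero_le j)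
    by_cases hmn : j + 1 ≤ n
    · obtain ⟨Γ, hΓ, hcomp⟩ := S2.clos_psiD_le hk hm1 hj
      have h1 : psiD S2.psiW.toPBCM T ≤ (j + 1) * (φ (j + 1) / (j + 1) + 1) :=
        le_trans (Nat.sInf_le ⟨Γ, hΓ, rfl⟩) hcomp
      have h2 := (S2.arith (φ := φ) hm1).2
      have h3 : φ (j + 1) ≤ φ n := hmono hmn
      omega
    · have hlt : psiA S2.psiW.toPBCM T < j + 1 := lt_of_le_of_lt hTa (by omega)
      rw [S2.clos_psiD_zero hk hm1 hj hlt]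
      exact Nat.zero_le _
  have hfin : ∀ n, (HSet S2.psiW.toPBCM A n).Finite :=
    fun n => (Set.finite_Iic (φ n + n)).subset (fun c hc => hub n c hc)
  refine ⟨A, S2.psiW, ?_, ?_, hfin, ?_⟩
  · intro T hT Q hQ
    obtain ⟨j, hj⟩ := Set.mem_iUnion.mp hT
    exact Set.mem_iUnion.mpr ⟨j, S2.closureT_trans hj hQ⟩
  · refine ⟨S2.tbl k hk 1 (φ 1 / 1 + 1), Set.mem_iUnion.mpr ⟨0, S2.self_mem_closureT _⟩, ?_⟩
    exact (S2.clos_anatomy (hk := hk) (S2.self_mem_closureT _)).2.2.2.1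
  · intro n
    constructor
    · rcases Nat.eq_zero_or_pos n with rfl | hn
      · rw [h0]
        exact Nat.zero_le _
      · have hself : S2.tbl k hk n (φ n / n + 1) ∈ A := by
          refine Set.mem_iUnion.mpr ⟨n - 1, ?_⟩
          have hn1 : n - 1 + 1 = n := by omega
          rw [hn1]
          exact S2.self_mem_closureT _
        have hAle : psiA S2.psiW.toPBCM (S2.tbl k hk n (φ n / n + 1)) ≤ n :=
          S2.tbl_psiA_le hk hn
        have hmem : psiD S2.psiW.toPBCM (S2.tbl k hk n (φ n / n + 1))
            ∈ HSet S2.psiW.toPBCM A n := ⟨_, hself, hAle, rfl⟩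
        have hge2 : φ n ≤ psiD S2.psiW.toPBCM (S2.tbl k hk n (φ n / n + 1)) :=
          le_trans (S2.arith (φ := φ) hn).1 (S2.tbl_psiD_ge hk hn)
        exact le_trans hge2 (le_csSup (hfin n).bddAbove hmem)
    · rcases Set.eq_empty_or_nonempty (HSet S2.psiW.toPBCM A n) with he | hne
      · show sSup (HSet S2.psiW.toPBCM A n) ≤ φ n + n
        rw [he, csSup_empty]
        exact Nat.zero_le _
      · exact csSup_le hne (hub n)
end

section
/- Let k ≥ 2 be an integer, A a nontrivial closed class of decision tables from M_k^∞, ψ a bounded complexity measure, T ∈ A, n ∈ ℕ, and l_ψ(T,n) > 0. Then there exists a mapping ν from E_k^{W(T)} to nonempty finite subsets of ℕ such that the table T* = J(ν,T) satisfies ψ^a(T*) ≤ n and ψ^d(T*) ≥ log_k l_ψ(T,n). -/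
open Classical

noncomputable section Aux

open Classical

/-- a chain decision tree realizing one word and ending in a leaf labeled `d` -/
def chainD (k : ℕ) (d : ℕ) : List (ℕ × ℕ) → DTree k
  | [] => DTree.leaf d
  | q :: rest => DTree.node q.1 0 (fun _ => q.2) (fun _ => chainD k d rest)

lemma chainD_paths (k d : ℕ) (α : List (ℕ × ℕ)) :
    (chainD k d α).paths = {(α, d)} := by
  induction α with
  | nil => rfl
  | cons q rest ih =>
      ext p
      simp only [chainD, DTree.paths, ih, Set.mem_iUnion, Set.mem_image,
        Set.mem_singleton_iff, Prod.ext_iff]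
      constructor
      · rintro ⟨i, p', ⟨hp1, hp2⟩, h3, h4⟩
        refine ⟨?_, ?_⟩
        · rw [← h3, hp1]
        · rw [← h4, hp2]
      · rintro ⟨h1, h2⟩
        refine ⟨0, (rest, d), ⟨rfl, rfl⟩, ?_, ?_⟩
        · simp [h1]
        · simp [h2]

lemma chainD_wf (k d : ℕ) (α : List (ℕ × ℕ)) (h : ∀ q ∈ α, q.2 < k) :
    (chainD k d α).wf := by
  induction α with
  | nil => trivial
  | cons q rest ih =>
      exact ⟨fun _ => h q (by simp), fun _ => ih fun q hq => h q (by simp [hq])⟩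

lemma chainD_attrs (k d : ℕ) (α : List (ℕ × ℕ)) :
    ∀ x ∈ (chainD k d α).attrs, ∃ q ∈ α, x = q.1 := by
  induction α with
  | nil => simp [chainD, DTree.attrs]
  | cons q rest ih =>
      intro x hx
      simp only [chainD, DTree.attrs, Finset.mem_insert, Finset.mem_biUnion] at hx
      rcases hx with h | ⟨_, _, h⟩
      · exact ⟨q, by simp, h⟩
      · obtain ⟨q', hq', hx⟩ := ih x h
        exact ⟨q', by simp [hq'], hx⟩

/-- a common decision of `Tβ` (arbitrary if `Tβ = Λ`) -/
def decOf {k : ℕ} (T : Table k) (β : List (ℕ × ℕ)) : ℕ :=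
  if h : ((T.applyWord β).rows).Nonempty then
    ((T.applyWord β).dec_nonempty h.choose h.choose_spec).choose
  else 0

lemma decOf_mem {k : ℕ} (T : Table k) (β : List (ℕ × ℕ))
    (h : ((T.applyWord β).rows).Nonempty) : decOf T β ∈ T.dec h.choose := by
  rw [decOf, dif_pos h]
  exact ((T.applyWord β).dec_nonempty h.choose h.choose_spec).choose_spec

/-- full deterministic tree splitting on the attributes in `L`, with accumulated word `β` -/
def buildD (k : ℕ) (T : Table k) (β : List (ℕ × ℕ)) : List ℕ → DTree k
  | [] => DTree.leaf (decOf T β)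
  | a :: L => DTree.node a (k - 1) (fun i => (i : ℕ))
      (fun i => buildD k T (β ++ [(a, (i : ℕ))]) L)

lemma buildD_paths {k : ℕ} (hk : 1 ≤ k) (T : Table k) (L : List ℕ) :
    ∀ β p, p ∈ (buildD k T β L).paths ↔
      ∃ γ : List (ℕ × ℕ), γ.map Prod.fst = L ∧ (∀ q ∈ γ, q.2 < k) ∧
        p = (γ, decOf T (β ++ γ)) := by
  have hkk : k - 1 + 1 = k := by omega
  induction L with
  | nil =>
      intro β p
      simp only [buildD, DTree.paths, Set.mem_singleton_iff]
      constructor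
      · rintro rfl; exact ⟨[], rfl, by simp, by simp⟩
      · rintro ⟨γ, h1, _, rfl⟩
        rw [List.map_eq_nil_iff] at h1; subst h1; simp
  | cons a L ih =>
      intro β p
      simp only [buildD, DTree.paths, Set.mem_iUnion, Set.mem_image]
      constructor
      · rintro ⟨i, p', hp', rfl⟩
        obtain ⟨γ, h1, h2, rfl⟩ := (ih _ p').mp hp'
        refine ⟨(a, (i : ℕ)) :: γ, by simp [h1], ?_, ?_⟩
        · intro q hq
          rcases List.mem_cons.mp hq with rfl | hq
          · simpa [hkk] using i.isLt
          · exact h2 q hq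
        · simp
      · rintro ⟨γ, h1, h2, rfl⟩
        rcases γ with _ | ⟨⟨a', v⟩, γ'⟩
        · simp at h1
        · simp only [List.map_cons, List.cons.injEq] at h1
          obtain ⟨rfl, h1⟩ := h1
          have hv : v < k - 1 + 1 := by
            rw [hkk]; exact h2 (a', v) (by simp)
          refine ⟨⟨v, hv⟩, (γ', decOf T (β ++ [(a', v)] ++ γ')), ?_, by simp⟩
          exact (ih _ _).mpr ⟨γ', h1, fun q hq => h2 q (by simp [hq]), rfl⟩

lemma buildD_wf {k : ℕ} (hk : 1 ≤ k) (T : Table k) (L : List ℕ) :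
    ∀ β, (buildD k T β L).wf := by
  induction L with
  | nil => intro β; trivial
  | cons a L ih =>
      intro β
      refine ⟨fun i => ?_, fun i => ih _⟩
      show (i : ℕ) < k
      have := i.isLt
      omega

lemma buildD_det {k : ℕ} (T : Table k) (L : List ℕ) :
    ∀ β, (buildD k T β L).det := by
  induction L with
  | nil => intro β; trivial
  | cons a L ih =>
      exact fun β => ⟨fun i j h => Fin.ext h, fun i => ih _⟩

lemma buildD_attrs {k : ℕ} (T : Table k) (L : List ℕ) :
    ∀ β, (buildD k T β L).attrs ⊆ L.toFinset := by
  induction L with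
  | nil => intro β; simp [buildD, DTree.attrs]
  | cons a L ih =>
      intro β x hx
      simp only [buildD, DTree.attrs, Finset.mem_insert, Finset.mem_biUnion] at hx
      rcases hx with rfl | ⟨_, _, h⟩
      · simp
      · simp only [List.toFinset_cons, Finset.mem_insert]
        exact Or.inr (ih _ h)

/-- the set of complete paths, as a Finset -/
def DTree.pathsF {k : ℕ} : DTree k → Finset (List (ℕ × ℕ) × ℕ)
  | DTree.leaf d => {([], d)}
  | DTree.node a _ lab ch =>
      Finset.univ.biUnion fun i =>
        (DTree.pathsF (ch i)).image fun p => ((a, lab i) :: p.1, p.2)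

lemma pathsF_coe {k : ℕ} (D : DTree k) : (DTree.pathsF D : Set (List (ℕ × ℕ) × ℕ)) = D.paths := by
  induction D with
  | leaf d => simp [DTree.pathsF, DTree.paths]
  | node a m lab ch ih =>
      ext p
      simp only [DTree.pathsF, Finset.coe_biUnion, Finset.coe_univ, Set.mem_univ,
        Set.iUnion_true, Set.mem_iUnion, Finset.mem_coe, Finset.mem_image,
        DTree.paths, Set.mem_image, ← ih, Set.mem_iUnion]

def KTree.pathsF {k : ℕ} (Γ : KTree k) : Finset (List (ℕ × ℕ) × ℕ) :=
  Finset.univ.biUnion fun i => (Γ.sub i).pathsF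

lemma KTree.pathsF_coe {k : ℕ} (Γ : KTree k) :
    (Γ.pathsF : Set (List (ℕ × ℕ) × ℕ)) = Γ.paths := by
  have h : Γ.paths = ⋃ i, ((Γ.sub i).pathsF : Set (List (ℕ × ℕ) × ℕ)) := by
    rw [KTree.paths]
    exact Set.iUnion_congr fun i => (_root_.pathsF_coe (Γ.sub i)).symm
  rw [h]
  ext p
  simp [KTree.pathsF]

lemma paths_nonempty {k : ℕ} (D : DTree k) : D.pathsF.Nonempty := by
  induction D with
  | leaf d => exact ⟨([], d), by simp [DTree.pathsF]⟩
  | node a m lab ch ih =>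
      obtain ⟨p, hp⟩ := ih 0
      exact ⟨((a, lab 0) :: p.1, p.2), by
        simp only [DTree.pathsF, Finset.mem_biUnion, Finset.mem_univ, Finset.mem_image]
        exact ⟨0, ⟨trivial, p, hp, rfl⟩⟩⟩

/-- counting complete paths of a deterministic tree -/
lemma pathsF_card {k : ℕ} (hk : 1 ≤ k) (D : DTree k) (hwf : D.wf) (hdet : D.det) :
    ∀ h : ℕ, (∀ p ∈ D.pathsF, p.1.length ≤ h) → D.pathsF.card ≤ k ^ h := by
  induction D with
  | leaf d => intro h _; simpa [DTree.pathsF] using Nat.one_le_pow _ _ hk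
  | node a m lab ch ih =>
      intro h hlen
      obtain ⟨p0, hp0⟩ := paths_nonempty (DTree.node a m lab ch)
      have h1 : 1 ≤ h := by
        have := hlen p0 hp0
        simp only [DTree.pathsF, Finset.mem_biUnion, Finset.mem_univ, Finset.mem_image] at hp0
        obtain ⟨i, -, p, hp, rfl⟩ := hp0
        simp at this; omega
      have hm : m + 1 ≤ k := by
        have : Function.Injective (fun i : Fin (m + 1) => (⟨lab i, hwf.1 i⟩ : Fin k)) := by
          intro i j hij
          exact hdet.1 (by simpa [Fin.ext_iff] using hij)
        simpa using Fintype.card_le_of_injective _ this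
      calc (DTree.node a m lab ch).pathsF.card
          ≤ ∑ i : Fin (m + 1), ((DTree.pathsF (ch i)).image
              fun p => ((a, lab i) :: p.1, p.2)).card := Finset.card_biUnion_le
        _ ≤ ∑ i : Fin (m + 1), k ^ (h - 1) := by
            refine Finset.sum_le_sum fun i _ => ?_
            refine le_trans (Finset.card_image_le) ?_
            refine ih i (hwf.2 i) (hdet.2 i) (h - 1) fun p hp => ?_
            have : ((a, lab i) :: p.1, p.2) ∈ (DTree.node a m lab ch).pathsF := by
              simp only [DTree.pathsF, Finset.mem_biUnion, Finset.mem_univ, Finset.mem_image]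
              exact ⟨i, trivial, p, hp, rfl⟩
            have := hlen _ this
            simp at this; omega
        _ = (m + 1) * k ^ (h - 1) := by simp [mul_comm]
        _ ≤ k * k ^ (h - 1) := Nat.mul_le_mul_right _ hm
        _ = k ^ h := by
            rw [← pow_succ']
            congr 1; omega

end Aux

/-- the table `J(ν,T)` whose decision sets record which words of `U` a row satisfies -/
noncomputable def mkT {k : ℕ} (T : Table k) (U : Finset (List (ℕ × ℕ)))
    (h : ∀ r ∈ T.rows, ∃ α ∈ U, Table.rowSat r α) : Table k where
  attrs := T.attrs
  rows := T.rows
  dec := fun r => (U.filter fun α => Table.rowSat r α).image Encodable.encode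
  rows_mem := T.rows_mem
  dec_nonempty := by
    intro r hr
    obtain ⟨α, hα, hs⟩ := h r hr
    exact ⟨Encodable.encode α, Finset.mem_image_of_mem _ (Finset.mem_filter.mpr ⟨hα, hs⟩)⟩

theorem stmt7' {k : ℕ} (hk : 2 ≤ k) (A : Set (Table k))
    (hclosed : IsClosedClass A) (hnontriv : NontrivialClass A)
    (ψ : BCM) (T : Table k) (hT : T ∈ A) (n : ℕ) (hl : 0 < lpsi ψ.toPBCM T n) :
    ∃ T' : Table k, T'.attrs = T.attrs ∧ T'.rows = T.rows ∧
      psiA ψ.toPBCM T' ≤ n ∧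
      Real.logb k (lpsi ψ.toPBCM T n : ℝ) ≤ (psiD ψ.toPBCM T' : ℝ) := by
  classical
  -- extract an irreducible cover of maximum cardinality `l_ψ(T,n)`
  have hmem : lpsi ψ.toPBCM T n ∈ {c | ∃ U, isIrredCover ψ.toPBCM n T U ∧ U.card = c} := by
    have hSne : Set.Nonempty {c | ∃ U, isIrredCover ψ.toPBCM n T U ∧ U.card = c} := by
      by_contra h
      rw [Set.not_nonempty_iff_eq_empty] at h
      have : lpsi ψ.toPBCM T n = 0 := by rw [lpsi, h, csSup_empty]; rfl
      omega
    have hbdd : BddAbove {c | ∃ U, isIrredCover ψ.toPBCM n T U ∧ U.card = c} := by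
      by_contra h
      have : lpsi ψ.toPBCM T n = 0 := by
        rw [lpsi, csSup_of_not_bddAbove h, csSup_empty]; rfl
      omega
    exact Nat.sSup_mem hSne hbdd
  obtain ⟨U, hU, hUcard⟩ := hmem
  have hUpos : 0 < U.card := by omega
  -- the rows of `T` are nonempty
  have hrows : T.rows.Nonempty := by
    by_contra h
    rw [Finset.not_nonempty_iff_eq_empty] at h
    have hne : (∅ : Finset (List (ℕ × ℕ))) ⊂ U :=
      Finset.empty_ssubset.mpr (Finset.card_pos.mp hUpos)
    exact hU.2 ∅ hne ⟨by simp, by simp [h]⟩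
  -- each word of `U` has a private row
  have hpriv : ∀ α ∈ U, ∃ r ∈ T.rows, Table.rowSat r α ∧
      ∀ β ∈ U, Table.rowSat r β → β = α := by
    intro α hα
    have hss : U.erase α ⊂ U := Finset.erase_ssubset hα
    have hnc := hU.2 _ hss
    rw [isCover, not_and] at hnc
    have h2 := hnc fun β hβ => hU.1.1 β (Finset.mem_of_mem_erase hβ)
    push_neg at h2
    obtain ⟨r, hr, hrn⟩ := h2
    obtain ⟨γ, hγU, hγs⟩ := hU.1.2 r hr
    have hγα : γ = α := by
      by_contra hne
      exact hrn γ (Finset.mem_erase.mpr ⟨hne, hγU⟩) hγs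
    subst hγα
    refine ⟨r, hr, hγs, fun β hβ hsat => ?_⟩
    by_contra hne
    exact hrn β (Finset.mem_erase.mpr ⟨hne, hβ⟩) hsat
  refine ⟨mkT T U hU.1.2, rfl, rfl, ?_, ?_⟩
  · -- ψ^a(T') ≤ n : the nondeterministic tree made of the chains of the cover
    have hlen : U.toList.length = U.card := Finset.length_toList U
    set e : Fin (U.card - 1 + 1) → List (ℕ × ℕ) :=
      fun i => U.toList.get ⟨i.1, by have := i.isLt; omega⟩ with he
    have he1 : ∀ i, e i ∈ U := fun i => Finset.mem_toList.mp (List.get_mem _ _)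
    have he2 : ∀ α ∈ U, ∃ i, e i = α := by
      intro α hα
      obtain ⟨i, hi⟩ := List.mem_iff_get.mp (Finset.mem_toList.mpr hα)
      refine ⟨⟨i.1, by have := i.isLt; omega⟩, ?_⟩
      rw [he]; simpa using hi
    set Γ1 : KTree k := ⟨U.card - 1, fun i => chainD k (Encodable.encode (e i)) (e i)⟩
      with hΓ1
    have hpaths1 : Γ1.paths = ⋃ i, {(e i, Encodable.encode (e i))} := by
      rw [hΓ1, KTree.paths]
      exact Set.iUnion_congr fun i => chainD_paths k _ _
    have hndt : isNDT (mkT T U hU.1.2) Γ1 := by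
      refine ⟨hrows, ?_, ?_, ?_, ?_⟩
      · intro i
        exact chainD_wf k _ _ fun q hq => ((hU.1.1 (e i) (he1 i)).1 q hq).2
      · intro x hx
        rw [hΓ1, KTree.attrs] at hx
        obtain ⟨i, -, hxi⟩ := Finset.mem_biUnion.mp hx
        obtain ⟨q, hq, rfl⟩ := chainD_attrs k _ _ x hxi
        exact ((hU.1.1 (e i) (he1 i)).1 q hq).1
      · intro r hr
        obtain ⟨α, hαU, hαs⟩ := hU.1.2 r hr
        obtain ⟨i, rfl⟩ := he2 α hαU
        refine ⟨(e i, Encodable.encode (e i)), ?_, hαs⟩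
        rw [hpaths1]
        exact Set.mem_iUnion.mpr ⟨i, rfl⟩
      · intro p hp
        rw [hpaths1] at hp
        obtain ⟨i, hi⟩ := Set.mem_iUnion.mp hp
        rw [Set.mem_singleton_iff] at hi
        subst hi
        right
        intro r hrr
        obtain ⟨hrT, hsat⟩ := Finset.mem_filter.mp hrr
        exact Finset.mem_image_of_mem _ (Finset.mem_filter.mpr ⟨he1 i, hsat⟩)
    have hcomp : treeComp ψ.toPBCM Γ1 ≤ n := by
      rw [treeComp]
      apply csSup_le
      · refine ⟨ψ.toPBCM.onWord (e 0), (e 0, Encodable.encode (e 0)), ?_, rfl⟩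
        rw [hpaths1]
        exact Set.mem_iUnion.mpr ⟨0, rfl⟩
      · rintro c ⟨p, hp, rfl⟩
        rw [hpaths1] at hp
        obtain ⟨i, hi⟩ := Set.mem_iUnion.mp hp
        rw [Set.mem_singleton_iff] at hi
        subst hi
        exact (hU.1.1 (e i) (he1 i)).2
    exact le_trans (Nat.sInf_le ⟨Γ1, hndt, rfl⟩) hcomp
  · -- the lower bound on ψ^d(T')
    -- first : for every deterministic tree for T', `U.card ≤ k ^ complexity`
    have hkey : ∀ Γ : KTree k, isDDT (mkT T U hU.1.2) Γ →
        U.card ≤ k ^ treeComp ψ.toPBCM Γ := by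
      intro Γ hΓ
      obtain ⟨⟨hne, hwf, hattrs, hcov, hdec⟩, hn0, hdet⟩ := hΓ
      set h := treeComp ψ.toPBCM Γ with hh
      have hfin : ((fun p : List (ℕ × ℕ) × ℕ => ψ.toPBCM.onWord p.1) '' Γ.paths).Finite := by
        rw [← KTree.pathsF_coe]
        exact Γ.pathsF.finite_toSet.image _
      have hble : ∀ p ∈ Γ.pathsF, ψ.toPBCM.onWord p.1 ≤ h := by
        intro p hp
        refine le_csSup hfin.bddAbove ?_
        exact ⟨p, by rw [← KTree.pathsF_coe]; exact hp, rfl⟩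
      have hlenb : ∀ p ∈ Γ.pathsF, p.1.length ≤ h := by
        intro p hp
        calc p.1.length = (p.1.map Prod.fst).length := (List.length_map _).symm
          _ ≤ ψ.toPBCM.toFun (p.1.map Prod.fst) := ψ.bdd _
          _ ≤ h := hble p hp
      have hcards : Γ.pathsF.card ≤ k ^ h := by
        calc Γ.pathsF.card ≤ ∑ i : Fin (Γ.n + 1), (Γ.sub i).pathsF.card :=
              Finset.card_biUnion_le
          _ ≤ ∑ i : Fin (Γ.n + 1), k ^ h := Finset.sum_le_sum fun i _ =>
              pathsF_card (by omega) (Γ.sub i) (hwf i) (hdet i) h fun p hp =>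
                hlenb p (Finset.mem_biUnion.mpr ⟨i, Finset.mem_univ i, hp⟩)
          _ = (Γ.n + 1) * k ^ h := by simp [mul_comm]
          _ = k ^ h := by rw [hn0, zero_add, one_mul]
      have hchoice : ∀ α : List (ℕ × ℕ), ∃ p : List (ℕ × ℕ) × ℕ, α ∈ U →
          p ∈ Γ.pathsF ∧ ∃ r ∈ T.rows, Table.rowSat r p.1 ∧
            ∀ β ∈ U, Table.rowSat r β → β = α := by
        intro α
        by_cases hα : α ∈ U
        · obtain ⟨r, hr, hsat, hpr⟩ := hpriv α hα
          obtain ⟨p, hp, hps⟩ := hcov r hr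
          rw [← KTree.pathsF_coe] at hp
          exact ⟨p, fun _ => ⟨hp, r, hr, hps, hpr⟩⟩
        · exact ⟨([], 0), fun hc => absurd hc hα⟩
      choose φ hφ using hchoice
      have hinj : Set.InjOn φ ↑U := by
        intro α hαU β hβU heq
        obtain ⟨hpA, rA, hrA, hsA, hprA⟩ := hφ α hαU
        obtain ⟨hpB, rB, hrB, hsB, hprB⟩ := hφ β hβU
        rw [heq] at hpA hsA
        have hmemA : rA ∈ ((mkT T U hU.1.2).applyWord (φ β).1).rows :=
          Finset.mem_filter.mpr ⟨hrA, hsA⟩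
        have hmemB : rB ∈ ((mkT T U hU.1.2).applyWord (φ β).1).rows :=
          Finset.mem_filter.mpr ⟨hrB, hsB⟩
        have hpB' : (φ β) ∈ Γ.paths := by
          rw [← KTree.pathsF_coe]; exact hpB
        rcases hdec (φ β) hpB' with hemp | hcom
        · rw [hemp] at hmemA
          simp at hmemA
        · have h1 := hcom rA hmemA
          have h2 := hcom rB hmemB
          simp only [mkT, Finset.mem_image, Finset.mem_filter] at h1 h2
          obtain ⟨γ1, ⟨hγ1U, hγ1s⟩, hγ1e⟩ := h1
          obtain ⟨γ2, ⟨hγ2U, hγ2s⟩, hγ2e⟩ := h2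
          have e1 : γ1 = α := hprA γ1 hγ1U hγ1s
          have e2 : γ2 = β := hprB γ2 hγ2U hγ2s
          subst e1; subst e2
          exact Encodable.encode_injective (by rw [hγ1e, hγ2e])
      have hcard2 := Finset.card_le_card_of_injOn φ (fun α hα => (hφ α hα).1) hinj
      omega
    -- the set of deterministic trees for T' is nonempty : the full tree
    have hk1 : 1 ≤ k := by omega
    set L : List ℕ := T.attrs.sort (· ≤ ·) with hL
    have hLattrs : ∀ a, a ∈ L ↔ a ∈ T.attrs := fun a => Finset.mem_sort _
    set Γ0 : KTree k := ⟨0, fun _ => buildD k (mkT T U hU.1.2) [] L⟩ with hΓ0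
    have hpaths0 : ∀ p, p ∈ Γ0.paths ↔ ∃ γ : List (ℕ × ℕ), γ.map Prod.fst = L ∧
        (∀ q ∈ γ, q.2 < k) ∧ p = (γ, decOf (mkT T U hU.1.2) γ) := by
      intro p
      rw [hΓ0, KTree.paths]
      constructor
      · intro hp
        obtain ⟨i, hi⟩ := Set.mem_iUnion.mp hp
        obtain ⟨γ, h1, h2, h3⟩ := (buildD_paths hk1 _ L [] p).mp hi
        exact ⟨γ, h1, h2, by simpa using h3⟩
      · rintro ⟨γ, h1, h2, h3⟩
        refine Set.mem_iUnion.mpr ⟨0, (buildD_paths hk1 _ L [] p).mpr ⟨γ, h1, h2, ?_⟩⟩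
        simpa using h3
    have huniq : ∀ γ : List (ℕ × ℕ), γ.map Prod.fst = L →
        ∀ r1 ∈ ((mkT T U hU.1.2).applyWord γ).rows,
        ∀ r2 ∈ ((mkT T U hU.1.2).applyWord γ).rows, r1 = r2 := by
      intro γ hγ r1 h1 r2 h2
      obtain ⟨h1T, h1s⟩ := Finset.mem_filter.mp h1
      obtain ⟨h2T, h2s⟩ := Finset.mem_filter.mp h2
      funext i
      by_cases hi : i ∈ T.attrs
      · have hiL : i ∈ γ.map Prod.fst := by rw [hγ]; exact (hLattrs i).mpr hi
        obtain ⟨q, hq, hqi⟩ := List.mem_map.mp hiL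
        rw [← hqi, h1s q hq, h2s q hq]
      · rw [(T.rows_mem r1 h1T).2 i hi, (T.rows_mem r2 h2T).2 i hi]
    have hddt : isDDT (mkT T U hU.1.2) Γ0 := by
      refine ⟨⟨hrows, ?_, ?_, ?_, ?_⟩, rfl, ?_⟩
      · intro i
        exact buildD_wf hk1 _ L []
      · intro x hx
        rw [hΓ0, KTree.attrs] at hx
        obtain ⟨i, -, hxi⟩ := Finset.mem_biUnion.mp hx
        have := buildD_attrs _ L [] hxi
        rw [List.mem_toFinset] at this
        exact (hLattrs x).mp this
      · intro r hr
        refine ⟨(L.map fun a => (a, r a), decOf (mkT T U hU.1.2) (L.map fun a => (a, r a))),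
          ?_, ?_⟩
        · refine (hpaths0 _).mpr ⟨L.map fun a => (a, r a), by simp [Function.comp_def], ?_, rfl⟩
          intro q hq
          obtain ⟨a, ha, rfl⟩ := List.mem_map.mp hq
          exact (T.rows_mem r hr).1 a ((hLattrs a).mp ha)
        · intro q hq
          obtain ⟨a, ha, rfl⟩ := List.mem_map.mp hq
          rfl
      · intro p hp
        obtain ⟨γ, h1, h2, rfl⟩ := (hpaths0 p).mp hp
        right
        intro r hrr
        have hne' : ((mkT T U hU.1.2).applyWord γ).rows.Nonempty := ⟨r, hrr⟩
        have hmem := decOf_mem (mkT T U hU.1.2) γ hne'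
        have : r = hne'.choose := huniq γ h1 r hrr hne'.choose hne'.choose_spec
        rw [this]
        exact hmem
      · intro i
        exact buildD_det _ L []
    -- psiD is attained
    have hDne : Set.Nonempty {c | ∃ Γ : KTree k, isDDT (mkT T U hU.1.2) Γ ∧
        treeComp ψ.toPBCM Γ = c} := ⟨treeComp ψ.toPBCM Γ0, Γ0, hddt, rfl⟩
    obtain ⟨Γmin, hΓmin, hΓeq⟩ := Nat.sInf_mem hDne
    have hfinal : lpsi ψ.toPBCM T n ≤ k ^ psiD ψ.toPBCM (mkT T U hU.1.2) := by
      rw [psiD, ← hΓeq]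
      rw [← hUcard]
      exact hkey Γmin hΓmin
    -- pass to real logarithms
    have hkR : (1 : ℝ) < (k : ℝ) := by exact_mod_cast hk
    have hpos : (0 : ℝ) < (lpsi ψ.toPBCM T n : ℝ) := by exact_mod_cast hl
    have hleR : (lpsi ψ.toPBCM T n : ℝ) ≤ (k : ℝ) ^ (psiD ψ.toPBCM (mkT T U hU.1.2)) := by
      exact_mod_cast hfinal
    calc Real.logb k (lpsi ψ.toPBCM T n : ℝ)
        ≤ Real.logb k ((k : ℝ) ^ (psiD ψ.toPBCM (mkT T U hU.1.2))) :=
          (Real.logb_le_logb hkR hpos (by positivity)).mpr hleR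
      _ = (psiD ψ.toPBCM (mkT T U hU.1.2) : ℝ) := by
          rw [Real.logb_pow, Real.logb_self_eq_one hkR, mul_one]

/-- **Lemma (7M1).** If `T ∈ A` and `l_ψ(T,n) > 0` then there is a mapping `ν` such that the
table `T* = J(ν,T)` (same attributes and rows as `T`, decisions given by `ν`) satisfies
`ψ^a(T*) ≤ n` and `ψ^d(T*) ≥ log_k l_ψ(T,n)`. -/
theorem stmt7 {k : ℕ} (hk : 2 ≤ k) (A : Set (Table k))
    (hclosed : IsClosedClass A) (hnontriv : NontrivialClass A)
    (ψ : BCM) (T : Table k) (hT : T ∈ A) (n : ℕ) (hl : 0 < lpsi ψ.toPBCM T n) :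
    ∃ T' : Table k, T'.attrs = T.attrs ∧ T'.rows = T.rows ∧
      psiA ψ.toPBCM T' ≤ n ∧
      Real.logb k (lpsi ψ.toPBCM T n : ℝ) ≤ (psiD ψ.toPBCM T' : ℝ) := by
  exact stmt7' hk A hclosed hnontriv ψ T hT n hl
end
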